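/- arXiv:1301.2131 — 10 statements merged into one kernel-verified Lean document; each statement's English description precedes it below -/
import Mathlib

section
/- The action on the polynomial ring C[∂] given by d_n · ∂^j = λ^n (∂ + n(b-1))(∂ - n)^j and c · ∂^j = 0 (extended linearly in j) defines a module structure over the Virasoro algebra, i.e. it satisfies [d_m, d_n]·p = d_m·(d_n·p) - d_n·(d_m·p) for all m, n ∈ ℤ and all polynomials p. -/
open Polynomial TensorProduct

/-- The Virasoro commutation relations for a family of operators `d i` (the action of the
basis vectors `d_i`) and a central operator `cc` (the action of the central element `c`) on a
complex vector space: `[d_i, d_j] = (j - i) d_{i+j} + δ_{i,-j} (i^3 - i)/12 c` and `c` central. -/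
def VirRep {V : Type*} [AddCommGroup V] [Module ℂ V]
    (d : ℤ → Module.End ℂ V) (cc : Module.End ℂ V) : Prop :=
  (∀ i : ℤ, cc * d i = d i * cc) ∧
    ∀ i j : ℤ, d i * d j - d j * d i =
      ((j : ℂ) - (i : ℂ)) • d (i + j) +
        (if i + j = 0 then ((i : ℂ) ^ 3 - (i : ℂ)) / 12 else 0) • cc

/-- A subspace invariant under the Virasoro action, i.e. a Virasoro submodule. -/
def VirInvariant {V : Type*} [AddCommGroup V] [Module ℂ V]
    (d : ℤ → Module.End ℂ V) (cc : Module.End ℂ V) (p : Submodule ℂ V) : Prop :=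
  (∀ i : ℤ, ∀ v ∈ p, d i v ∈ p) ∧ ∀ v ∈ p, cc v ∈ p

/-- The operator by which `d_n` acts on `Ω(λ, b) = ℂ[∂]`:
`f(∂) ↦ λ^n (∂ + n(b-1)) f(∂ - n)`. The central element acts by `0`. -/
noncomputable def omegaD (lam b : ℂ) (n : ℤ) : Module.End ℂ (Polynomial ℂ) where
  toFun f := lam ^ n • ((X + Polynomial.C ((n : ℂ) * (b - 1))) * f.comp (X - Polynomial.C (n : ℂ)))
  map_add' f g := by simp [add_comp, mul_add, smul_add]
  map_smul' a f := by
    simp only [RingHom.id_apply, smul_comp, mul_smul_comm]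
    rw [smul_comm]

/-- The diagonal action of `d_i` on a tensor product of two Virasoro modules. -/
noncomputable def tensorD {V W : Type*} [AddCommGroup V] [Module ℂ V] [AddCommGroup W]
    [Module ℂ W] (dV : ℤ → Module.End ℂ V) (dW : ℤ → Module.End ℂ W) (i : ℤ) :
    Module.End ℂ (V ⊗[ℂ] W) :=
  LinearMap.rTensor W (dV i) + LinearMap.lTensor V (dW i)

/-- The diagonal action of the central element on a tensor product of two Virasoro modules. -/
noncomputable def tensorC {V W : Type*} [AddCommGroup V] [Module ℂ V] [AddCommGroup W]
    [Module ℂ W] (cV : Module.End ℂ V) (cW : Module.End ℂ W) : Module.End ℂ (V ⊗[ℂ] W) :=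
  LinearMap.rTensor W cV + LinearMap.lTensor V cW

/-- The action `d_n · ∂^j = λ^n (∂ + n(b-1))(∂ - n)^j`, `c · ∂^j = 0` makes
`ℂ[∂]` a module over the Virasoro algebra: the commutation relations are satisfied. -/
theorem omega_is_virasoro_module (lam b : ℂ) (hlam : lam ≠ 0) :
    VirRep (omegaD lam b) 0 := by
  constructor
  · intro i; simp
  · intro i j
    rw [smul_zero, add_zero]
    apply LinearMap.ext; intro f
    simp only [omegaD, LinearMap.sub_apply, Module.End.mul_apply, LinearMap.smul_apply,
      LinearMap.coe_mk, AddHom.coe_mk]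
    have hc : ∀ m k : ℤ, (X - C (m:ℂ)).comp (X - C (k:ℂ)) = X - C ((k + m : ℤ) : ℂ) := by
      intro m k; simp [sub_comp]; ring
    rw [smul_comm]
    simp only [smul_comp, mul_smul_comm, smul_smul, ← zpow_add₀ hlam]
    rw [add_comm j i, ← smul_sub, mul_smul]
    congr 1
    rw [mul_comp, add_comp, X_comp, C_comp, comp_assoc, hc,
        mul_comp, add_comp, X_comp, C_comp, comp_assoc, hc, add_comm j i,
        Polynomial.smul_eq_C_mul]
    push_cast
    simp only [C_add, C_sub, C_mul, C_neg, C_1]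
    ring
end

section
/- For λ ∈ ℂ* and b ∈ ℂ with b ≠ 1, the Virasoro module Ω(λ, b) is irreducible (simple): its only submodules are 0 and the whole module. -/
open Polynomial TensorProduct

/-- If all evaluations of `Q : ℂ[X][Y]` at scalar points lie in a subspace `p` of `ℂ[X]`,
then all coefficients of `Q` lie in `p`. -/
lemma coeff_mem_of_eval_mem (p : Submodule ℂ (Polynomial ℂ))
    (Q : Polynomial (Polynomial ℂ)) (h : ∀ n : ℕ, Q.eval (Polynomial.C (n : ℂ)) ∈ p) (k : ℕ) :
    Q.coeff k ∈ p := by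
  by_cases hk : Q.natDegree < k
  · rw [Q.coeff_eq_zero_of_natDegree_lt hk]; exact p.zero_mem
  push_neg at hk
  rw [← Submodule.Quotient.mk_eq_zero]
  rw [← Module.forall_dual_apply_eq_zero_iff ℂ]
  intro φ
  set ψ : Polynomial ℂ →ₗ[ℂ] ℂ := φ ∘ₗ p.mkQ with hψ
  have hψ0 : ∀ g ∈ p, ψ g = 0 := by
    intro g hg
    simp [hψ, (Submodule.Quotient.mk_eq_zero p).2 hg]
  set q : Polynomial ℂ := ∑ j ∈ Finset.range (Q.natDegree + 1), C (ψ (Q.coeff j)) * X ^ j with hq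
  have heval : ∀ n : ℕ, q.eval ((n : ℂ)) = ψ (Q.eval (Polynomial.C (n : ℂ))) := by
    intro n
    rw [Polynomial.eval_eq_sum_range (p := Q) (Polynomial.C (n : ℂ))]
    have : ∀ j : ℕ, Q.coeff j * (Polynomial.C ((n : ℂ))) ^ j = ((n : ℂ) ^ j) • Q.coeff j := by
      intro j
      rw [← Polynomial.C_pow, Polynomial.smul_eq_C_mul, mul_comm]
    rw [map_sum]
    simp only [this, map_smul]
    rw [hq, eval_finset_sum]
    refine Finset.sum_congr rfl fun j _ => ?_
    rw [eval_mul, eval_pow, eval_C, eval_X, smul_eq_mul, mul_comm]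
  have hq0 : q = 0 := by
    apply Polynomial.eq_zero_of_infinite_isRoot
    apply Set.Infinite.mono (s := Set.range ((↑) : ℕ → ℂ))
    · rintro x ⟨n, rfl⟩
      simp only [Set.mem_setOf_eq, IsRoot.def, heval n, hψ0 _ (h n)]
    · exact Set.infinite_range_of_injective Nat.cast_injective
  have : q.coeff k = ψ (Q.coeff k) := by
    rw [hq, Polynomial.finset_sum_coeff]
    simp only [Polynomial.coeff_C_mul, Polynomial.coeff_X_pow]
    rw [Finset.sum_eq_single k]
    · simp
    · intro j _ hj; simp [Ne.symm hj]
    · intro hk'; exact absurd (Finset.mem_range.2 (Nat.lt_succ_of_le hk)) hk'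
  rw [show φ (Submodule.Quotient.mk (Q.coeff k)) = ψ (Q.coeff k) from rfl, ← this, hq0]
  simp

/-- For `λ ≠ 0` and `b ≠ 1` the module `Ω(λ, b)` is irreducible. -/
theorem omega_irreducible (lam b : ℂ) (hlam : lam ≠ 0) (hb : b ≠ 1)
    (p : Submodule ℂ (Polynomial ℂ)) (hp : VirInvariant (omegaD lam b) 0 p) :
    p = ⊥ ∨ p = ⊤ := by
  obtain ⟨hd', -⟩ := hp
  have hd : ∀ i : ℤ, ∀ f ∈ p,
      (X + C ((i : ℂ) * (b - 1))) * f.comp (X - C (i : ℂ)) ∈ p := by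
    intro i f hf
    have h1 := hd' i f hf
    have h2 : (omegaD lam b i) f
        = lam ^ i • ((X + C ((i : ℂ) * (b - 1))) * f.comp (X - C (i : ℂ))) := rfl
    rw [h2] at h1
    have h3 := p.smul_mem ((lam ^ i)⁻¹) h1
    rwa [smul_smul, inv_mul_cancel₀ (zpow_ne_zero i hlam), one_smul] at h3
  have hX : ∀ f ∈ p, X * f ∈ p := by
    intro f hf
    simpa using hd 0 f hf
  by_cases hbot : p = ⊥
  · exact Or.inl hbot
  right
  obtain ⟨f, hf, hf0⟩ := Submodule.ne_bot_iff p |>.mp hbot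
  set N := f.natDegree with hN
  set F : Polynomial (Polynomial ℂ) :=
    f.eval₂ (Polynomial.C.comp Polynomial.C) (Polynomial.C X - Polynomial.X) with hF
  set Q : Polynomial (Polynomial ℂ) :=
    (Polynomial.C X + Polynomial.X * Polynomial.C (Polynomial.C (b - 1))) * F with hQ
  -- evaluations of Q
  have heQ : ∀ z : ℂ, Q.eval (Polynomial.C z)
      = (X + C (z * (b - 1))) * f.comp (X - C z) := by
    intro z
    have hg : Q.eval (Polynomial.C z) = (Polynomial.evalRingHom (Polynomial.C z)) Q := rfl
    rw [hg, map_mul]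
    congr 1
    · simp [mul_comm]
    · rw [hF]
      show (Polynomial.evalRingHom (Polynomial.C z))
        (f.eval₂ (Polynomial.C.comp Polynomial.C) (Polynomial.C X - Polynomial.X)) = _
      rw [Polynomial.hom_eval₂]
      have h1 : (Polynomial.evalRingHom (Polynomial.C z)).comp
          (Polynomial.C.comp Polynomial.C) = Polynomial.C := by
        ext a; simp
      have h2 : (Polynomial.evalRingHom (Polynomial.C z))
          (Polynomial.C X - Polynomial.X) = X - Polynomial.C z := by
        simp
      rw [h1, h2]
      rfl
  -- coefficients of F
  have hpowdeg : ∀ j : ℕ,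
      ((Polynomial.C X - Polynomial.X : Polynomial (Polynomial ℂ)) ^ j).natDegree ≤ j := by
    intro j
    calc ((Polynomial.C X - Polynomial.X : Polynomial (Polynomial ℂ)) ^ j).natDegree
        ≤ j * (Polynomial.C X - Polynomial.X : Polynomial (Polynomial ℂ)).natDegree :=
          Polynomial.natDegree_pow_le
      _ ≤ j * 1 := by
          refine Nat.mul_le_mul_left j ?_
          refine le_trans (Polynomial.natDegree_sub_le _ _) ?_
          simp
      _ = j := mul_one j
  have hpowj : ∀ j : ℕ,
      ((Polynomial.C X - Polynomial.X : Polynomial (Polynomial ℂ)) ^ j).coeff j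
        = (-1 : Polynomial ℂ) ^ j := by
    intro j
    have h1 : (Polynomial.C X - Polynomial.X : Polynomial (Polynomial ℂ))
        = -(Polynomial.X - Polynomial.C X) := by ring
    have hm : (Polynomial.X - Polynomial.C X : Polynomial (Polynomial ℂ)).Monic :=
      Polynomial.monic_X_sub_C X
    have hmj : ((Polynomial.X - Polynomial.C X : Polynomial (Polynomial ℂ)) ^ j).Monic :=
      hm.pow j
    have hdj : ((Polynomial.X - Polynomial.C X : Polynomial (Polynomial ℂ)) ^ j).natDegree
        = j := by
      rw [Polynomial.natDegree_pow, Polynomial.natDegree_X_sub_C, mul_one]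
    have hc1 : ((Polynomial.X - Polynomial.C X : Polynomial (Polynomial ℂ)) ^ j).coeff j = 1 := by
      have h3 := hmj.coeff_natDegree
      rwa [hdj] at h3
    have hneg : ((-1 : Polynomial (Polynomial ℂ)) ^ j)
        = Polynomial.C ((-1 : Polynomial ℂ) ^ j) := by
      simp [map_pow]
    rw [h1, show (-(Polynomial.X - Polynomial.C X : Polynomial (Polynomial ℂ))) ^ j = (-1) ^ j * (Polynomial.X - Polynomial.C X) ^ j from by rw [show (-(Polynomial.X - Polynomial.C X : Polynomial (Polynomial ℂ))) = (-1) * (Polynomial.X - Polynomial.C X) from by ring, mul_pow], hneg, Polynomial.coeff_C_mul, hc1, mul_one]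
  -- representation of F as a sum
  have hFrep : F = ∑ j ∈ Finset.range (N + 1),
      Polynomial.C (Polynomial.C (f.coeff j)) * (Polynomial.C X - Polynomial.X) ^ j := by
    rw [hF, Polynomial.eval₂_eq_sum_range]
    rfl
  have hFcoeff : ∀ m : ℕ, F.coeff m = ∑ j ∈ Finset.range (N + 1),
      Polynomial.C (f.coeff j)
        * ((Polynomial.C X - Polynomial.X : Polynomial (Polynomial ℂ)) ^ j).coeff m := by
    intro m
    rw [hFrep, Polynomial.finset_sum_coeff]
    exact Finset.sum_congr rfl fun j _ => Polynomial.coeff_C_mul _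
  have hFtop : F.coeff (N + 1) = 0 := by
    rw [hFcoeff]
    refine Finset.sum_eq_zero fun j hj => ?_
    rw [Polynomial.coeff_eq_zero_of_natDegree_lt
      (lt_of_le_of_lt (hpowdeg j) (Finset.mem_range.1 hj)), mul_zero]
  have hFN : F.coeff N = Polynomial.C (f.coeff N) * (-1 : Polynomial ℂ) ^ N := by
    rw [hFcoeff, Finset.sum_eq_single N]
    · rw [hpowj]
    · intro j hj hjne
      have hjN : j < N := lt_of_le_of_ne (Nat.lt_succ_iff.1 (Finset.mem_range.1 hj)) hjne
      rw [Polynomial.coeff_eq_zero_of_natDegree_lt (lt_of_le_of_lt (hpowdeg j) hjN), mul_zero]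
    · intro h; exact absurd (Finset.mem_range.2 (Nat.lt_succ_self N)) h
  set c₀ : ℂ := (b - 1) * (f.coeff N * (-1) ^ N) with hc₀def
  have hc₀ : c₀ ≠ 0 := by
    refine mul_ne_zero (sub_ne_zero.2 hb) (mul_ne_zero ?_ ?_)
    · exact Polynomial.leadingCoeff_ne_zero.2 hf0
    · exact pow_ne_zero _ (neg_ne_zero.2 one_ne_zero)
  have hQcoeff : Q.coeff (N + 1) = Polynomial.C c₀ := by
    rw [hQ, add_mul, Polynomial.coeff_add, Polynomial.coeff_C_mul, hFtop, mul_zero, zero_add,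
      mul_assoc, Polynomial.coeff_X_mul, Polynomial.coeff_C_mul, hFN, hc₀def]
    simp [map_mul, map_pow, mul_assoc]
  have hQmem : ∀ n : ℕ, Q.eval (Polynomial.C (n : ℂ)) ∈ p := by
    intro n
    rw [heQ]
    simpa using hd (n : ℤ) f hf
  have hCc₀ : Polynomial.C c₀ ∈ p := by
    have h2 := coeff_mem_of_eval_mem p Q hQmem (N + 1)
    rwa [hQcoeff] at h2
  have h1 : (1 : Polynomial ℂ) ∈ p := by
    have h2 := p.smul_mem c₀⁻¹ hCc₀
    rwa [Polynomial.smul_C, smul_eq_mul, inv_mul_cancel₀ hc₀, Polynomial.C_1] at h2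
  rw [Submodule.eq_top_iff']
  intro g
  induction g using Polynomial.induction_on with
  | C a =>
    have h2 := p.smul_mem a h1
    rwa [Polynomial.smul_eq_C_mul, mul_one] at h2
  | add u v hu hv => exact p.add_mem hu hv
  | monomial n a ih =>
    have h2 := hX _ ih
    rwa [show X * (Polynomial.C a * X ^ n) = Polynomial.C a * X ^ (n + 1) from by ring] at h2
end

section
/- For λ ∈ ℂ*, the module Ω(λ, 1) has a codimension-one submodule, namely ∂·ℂ[∂] (the polynomials with zero constant term), and this submodule is isomorphic as a Virasoro module to Ω(λ, 0). -/
open Polynomial TensorProduct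

/-- `Ω(λ, 1)` has the codimension-one submodule `∂·ℂ[∂]` (the polynomials with
zero constant term), and this submodule is isomorphic as a Virasoro module to `Ω(λ, 0)`. -/
theorem omega_one_codim_one_submodule (lam : ℂ) (hlam : lam ≠ 0) :
    VirInvariant (omegaD lam 1) 0 (LinearMap.ker (lcoeff ℂ 0)) ∧
      Module.finrank ℂ (Polynomial ℂ ⧸ LinearMap.ker (lcoeff ℂ 0)) = 1 ∧
      ∃ e : Polynomial ℂ ≃ₗ[ℂ] LinearMap.ker (lcoeff ℂ 0),
        ∀ (n : ℤ) (f : Polynomial ℂ),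
          ((e (omegaD lam 0 n f) : Polynomial ℂ)) = omegaD lam 1 n (e f : Polynomial ℂ) := by
  refine ⟨⟨?_, ?_⟩, ?_, ?_⟩
  · intro i v hv
    simp only [LinearMap.mem_ker, lcoeff_apply] at hv ⊢
    simp [omegaD, mul_coeff_zero, hv]
  · intro v hv; simp
  · have hsurj : Function.Surjective (lcoeff ℂ 0) := fun a => ⟨C a, by simp⟩
    have e2 := (LinearMap.quotKerEquivOfSurjective (lcoeff ℂ 0) hsurj)
    rw [e2.finrank_eq, Module.finrank_self]
  · have hmem : ∀ f : Polynomial ℂ, X * f ∈ LinearMap.ker (lcoeff ℂ 0) := fun f => by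
      simp [mul_coeff_zero]
    let L : Polynomial ℂ →ₗ[ℂ] LinearMap.ker (lcoeff ℂ 0) :=
      { toFun := fun f => ⟨X * f, hmem f⟩
        map_add' := fun f g => by ext; simp [mul_add]
        map_smul' := fun a f => by ext; simp [mul_smul_comm] }
    have hbij : Function.Bijective L := by
      constructor
      · intro f g h
        have h' : X * f = X * g := congrArg Subtype.val h
        exact mul_left_cancel₀ X_ne_zero h'
      · rintro ⟨p, hp⟩
        simp only [LinearMap.mem_ker, lcoeff_apply] at hp
        obtain ⟨q, hq⟩ := (X_dvd_iff).2 hp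
        exact ⟨q, by simp [L, hq.symm]⟩
    refine ⟨LinearEquiv.ofBijective L hbij, fun n f => ?_⟩
    show X * omegaD lam 0 n f = omegaD lam 1 n (X * f)
    simp only [omegaD, LinearMap.coe_mk, AddHom.coe_mk, mul_comp, X_comp, mul_smul_comm]
    congr 1
    rw [show ((n : ℂ) * (0 - 1)) = -n by ring, show ((n : ℂ) * (1 - 1)) = 0 by ring,
      map_neg, map_zero]
    ring
end

section
/- Let λ ∈ ℂ*, b ∈ ℂ \ {1}, and let V be an irreducible module over the Virasoro algebra such that for every v ∈ V there exists K(v) ∈ ℕ with d_l · v = 0 for all l ≥ K(v). Then the tensor product Ω(λ,b) ⊗ V, with the diagonal Virasoro action x·(p ⊗ v) = (x·p) ⊗ v + p ⊗ (x·v), is an irreducible Virasoro module. -/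
open Polynomial TensorProduct

/-! ### Auxiliary lemmas -/

/-- Finite-difference extraction: if a "polynomial in `l`" with module coefficients takes
values in a submodule for all `l ≥ K`, then its top coefficient lies in the submodule. -/
lemma sum_pow_smul_mem {W : Type*} [AddCommGroup W] [Module ℂ W] (M : Submodule ℂ W) :
    ∀ (n : ℕ) (u : ℕ → W) (K : ℤ),
      (∀ l : ℤ, K ≤ l → (∑ j ∈ Finset.range (n + 1), (l : ℂ) ^ j • u j) ∈ M) → u n ∈ M := by
  intro n
  induction n with
  | zero =>
    intro u K h
    simpa using h K le_rfl
  | succ n ih =>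
    intro u K h
    set u' : ℕ → W := fun k => ∑ j ∈ Finset.Ioc k (n + 1), ((j.choose k : ℕ) : ℂ) • u j with hu'
    have key : ∀ l : ℤ, K ≤ l → (∑ k ∈ Finset.range (n + 1), (l : ℂ) ^ k • u' k) ∈ M := by
      intro l hl
      have e0 : ∀ j ∈ Finset.range (n + 2), ((l : ℂ) + 1) ^ j • u j - (l : ℂ) ^ j • u j
          = ∑ k ∈ Finset.range (n + 2),
            (if k < j then ((l : ℂ) ^ k * (j.choose k : ℂ)) • u j else 0) := by
        intro j hj
        have hjn : j ≤ n + 1 := by simpa [Nat.lt_succ_iff] using hj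
        have hb : ((l : ℂ) + 1) ^ j - (l : ℂ) ^ j
            = ∑ k ∈ Finset.range j, (l : ℂ) ^ k * (j.choose k : ℂ) := by
          rw [add_pow]
          simp only [one_pow, mul_one]
          rw [Finset.sum_range_succ]
          simp
        rw [← sub_smul, hb, Finset.sum_smul]
        rw [← Finset.sum_subset (Finset.range_subset_range.mpr (show j ≤ n + 2 by omega))
            (fun k _ hk => if_neg (by simp only [Finset.mem_range] at hk; omega))]
        exact Finset.sum_congr rfl fun k hk => (if_pos (Finset.mem_range.mp hk)).symm
      have e1 : (∑ j ∈ Finset.range (n + 2), ((l : ℂ) + 1) ^ j • u j)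
            - (∑ j ∈ Finset.range (n + 2), (l : ℂ) ^ j • u j)
          = ∑ k ∈ Finset.range (n + 1), (l : ℂ) ^ k • u' k := by
        rw [← Finset.sum_sub_distrib, Finset.sum_congr rfl e0, Finset.sum_comm]
        have e2 : ∀ k ∈ Finset.range (n + 2),
            (∑ j ∈ Finset.range (n + 2),
              (if k < j then ((l : ℂ) ^ k * (j.choose k : ℂ)) • u j else 0))
            = if k ≤ n then (l : ℂ) ^ k • u' k else 0 := by
          intro k hk
          by_cases hkn : k ≤ n
          · rw [if_pos hkn, hu']
            simp only
            rw [Finset.smul_sum]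
            rw [← Finset.sum_subset
              (show Finset.Ioc k (n + 1) ⊆ Finset.range (n + 2) by
                intro j hj; simp only [Finset.mem_Ioc] at hj; simp; omega)]
            · exact Finset.sum_congr rfl fun j hj => by
                rw [if_pos (Finset.mem_Ioc.mp hj).1, smul_smul]
            · intro j hj hj'
              simp only [Finset.mem_range] at hj
              simp only [Finset.mem_Ioc] at hj'
              rw [if_neg (by omega)]
          · rw [if_neg hkn]
            apply Finset.sum_eq_zero
            intro j hj
            simp only [Finset.mem_range] at hj hk
            rw [if_neg (by omega)]
        rw [Finset.sum_congr rfl e2, Finset.sum_range_succ, if_neg (by omega), add_zero]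
        exact Finset.sum_congr rfl fun k hk => if_pos (by simpa [Nat.lt_succ_iff] using hk)
      have h1 := h (l + 1) (by omega)
      have h2 := h l hl
      have hc : (((l + 1 : ℤ)) : ℂ) = (l : ℂ) + 1 := by push_cast; ring
      rw [hc] at h1
      rw [← e1]
      exact sub_mem h1 h2
    have hun : u' n ∈ M := ih u' K key
    have heq : u' n = ((n + 1 : ℕ) : ℂ) • u (n + 1) := by
      rw [hu']
      simp only
      rw [Nat.Ioc_succ_singleton, Finset.sum_singleton, Nat.choose_succ_self_right]
    rw [heq] at hun
    have hne : ((n + 1 : ℕ) : ℂ) ≠ 0 := by exact_mod_cast Nat.succ_ne_zero n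
    have h3 := M.smul_mem (((n + 1 : ℕ) : ℂ))⁻¹ hun
    rwa [inv_smul_smul₀ hne] at h3

section Ecoeff

variable {V : Type*} [AddCommGroup V] [Module ℂ V]

/-- Extraction of the `n`-th coefficient of an element of `ℂ[X] ⊗ V`. -/
noncomputable def Ecoeff (n : ℕ) : Polynomial ℂ ⊗[ℂ] V →ₗ[ℂ] V :=
  (TensorProduct.lid ℂ V).toLinearMap ∘ₗ LinearMap.rTensor V (Polynomial.lcoeff ℂ n)

lemma Ecoeff_tmul (n : ℕ) (p : Polynomial ℂ) (v : V) :
    Ecoeff n (p ⊗ₜ[ℂ] v) = p.coeff n • v := by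
  simp [Ecoeff]

/-- Every element of `ℂ[X] ⊗ V` is a finite sum `∑ X^i ⊗ v_i`. -/
lemma tensor_rep (w : Polynomial ℂ ⊗[ℂ] V) :
    ∃ N : ℕ, (∀ n, N < n → Ecoeff n w = 0) ∧
      w = ∑ i ∈ Finset.range (N + 1), ((X : Polynomial ℂ) ^ i) ⊗ₜ[ℂ] Ecoeff i w := by
  induction w using TensorProduct.induction_on with
  | zero => exact ⟨0, by simp, by simp⟩
  | tmul p v =>
    refine ⟨p.natDegree, fun n hn => by
      rw [Ecoeff_tmul, coeff_eq_zero_of_natDegree_lt hn, zero_smul], ?_⟩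
    conv_lhs => rw [p.as_sum_range' (p.natDegree + 1) (lt_add_one _)]
    rw [sum_tmul]
    refine Finset.sum_congr rfl fun i hi => ?_
    rw [Ecoeff_tmul, ← C_mul_X_pow_eq_monomial, tmul_smul, smul_tmul', smul_eq_C_mul]
  | add x y hx hy =>
    obtain ⟨Nx, hx0, hxr⟩ := hx
    obtain ⟨Ny, hy0, hyr⟩ := hy
    refine ⟨max Nx Ny, fun n hn => by
      rw [map_add, hx0 n (by omega), hy0 n (by omega), add_zero], ?_⟩
    have hgen : ∀ (z : Polynomial ℂ ⊗[ℂ] V) (Nz : ℕ), Nz ≤ max Nx Ny →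
        (∀ n, Nz < n → Ecoeff n z = 0) →
        z = ∑ i ∈ Finset.range (Nz + 1), ((X : Polynomial ℂ) ^ i) ⊗ₜ[ℂ] Ecoeff i z →
        z = ∑ i ∈ Finset.range (max Nx Ny + 1), ((X : Polynomial ℂ) ^ i) ⊗ₜ[ℂ] Ecoeff i z := by
      intro z Nz hle h0 hr
      conv_lhs => rw [hr]
      refine Finset.sum_subset (Finset.range_subset_range.mpr (by omega)) ?_
      intro i _ hi
      rw [h0 i (by simp only [Finset.mem_range] at hi; omega), tmul_zero]
    have hx' := hgen x Nx (le_max_left _ _) hx0 hxr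
    have hy' := hgen y Ny (le_max_right _ _) hy0 hyr
    calc x + y = ∑ i ∈ Finset.range (max Nx Ny + 1),
          (((X : Polynomial ℂ) ^ i) ⊗ₜ[ℂ] Ecoeff i x
            + ((X : Polynomial ℂ) ^ i) ⊗ₜ[ℂ] Ecoeff i y) := by
          rw [Finset.sum_add_distrib, ← hx', ← hy']
      _ = _ := Finset.sum_congr rfl fun i _ => by rw [map_add, tmul_add]

end Ecoeff

lemma omegaD_apply (lam b : ℂ) (n : ℤ) (f : Polynomial ℂ) :
    omegaD lam b n f
      = lam ^ n • ((X + Polynomial.C ((n : ℂ) * (b - 1))) * f.comp (X - Polynomial.C (n : ℂ))) :=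
  rfl

lemma omegaD_X_pow (lam b : ℂ) (n : ℤ) (k : ℕ) :
    omegaD lam b n (X ^ k)
      = lam ^ n • ((X + Polynomial.C ((n : ℂ) * (b - 1))) * (X - Polynomial.C (n : ℂ)) ^ k) := by
  rw [omegaD_apply, X_pow_comp]

lemma omegaD_one (lam b : ℂ) (n : ℤ) :
    omegaD lam b n 1 = lam ^ n • (X + Polynomial.C ((n : ℂ) * (b - 1))) := by
  rw [omegaD_apply, one_comp, mul_one]

lemma tensorD_tmul {V W : Type*} [AddCommGroup V] [Module ℂ V] [AddCommGroup W]
    [Module ℂ W] (dV : ℤ → Module.End ℂ V) (dW : ℤ → Module.End ℂ W) (i : ℤ)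
    (p : V) (v : W) :
    tensorD dV dW i (p ⊗ₜ v) = (dV i p) ⊗ₜ v + p ⊗ₜ (dW i v) := by
  simp [tensorD]

/-- The auxiliary two-variable polynomial `(∂ + (b-1)·l)(∂ - l)^i`, viewed as a polynomial
in `l` with coefficients in `ℂ[∂]`. -/
noncomputable def Qpoly (b : ℂ) (i : ℕ) : Polynomial (Polynomial ℂ) :=
  (Polynomial.C X + Polynomial.C (Polynomial.C (b - 1)) * X) * (Polynomial.C X - X) ^ i

lemma Qpoly_natDegree_le (b : ℂ) (i : ℕ) : (Qpoly b i).natDegree ≤ i + 1 := by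
  have h1 : (Polynomial.C (X : Polynomial ℂ)
      + Polynomial.C (Polynomial.C (b - 1)) * X).natDegree ≤ 1 := by
    refine (natDegree_add_le _ _).trans (max_le (by simp [natDegree_C]) ?_)
    exact (natDegree_C_mul_le _ _).trans (by simp)
  have h2 : (((Polynomial.C (X : Polynomial ℂ)) - X) ^ i).natDegree ≤ i := by
    refine (natDegree_pow_le).trans ?_
    have : ((Polynomial.C (X : Polynomial ℂ)) - X).natDegree = 1 := by
      rw [← neg_sub, natDegree_neg, natDegree_X_sub_C]
    rw [this, mul_one]
  exact (natDegree_mul_le).trans (by omega)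

lemma Qpoly_eval (b : ℂ) (i : ℕ) (l : ℂ) :
    (Qpoly b i).eval (Polynomial.C l)
      = (X + Polynomial.C (l * (b - 1))) * (X - Polynomial.C l) ^ i := by
  simp only [Qpoly, eval_mul, eval_add, eval_pow, eval_sub, eval_C, eval_X, ← C_mul,
    mul_comm (b - 1) l]

lemma Qpoly_coeff_top (b : ℂ) (s : ℕ) :
    (Qpoly b s).coeff (s + 1) = Polynomial.C ((b - 1) * (-1) ^ s) := by
  set B : Polynomial (Polynomial ℂ) := (Polynomial.C X - X) ^ s with hB
  have hdeg1 : ((Polynomial.C (X : Polynomial ℂ)) - X).natDegree = 1 := by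
    rw [← neg_sub, natDegree_neg, natDegree_X_sub_C]
  have hBdeg : B.natDegree ≤ s := by
    refine (natDegree_pow_le).trans ?_
    rw [hdeg1, mul_one]
  have hB1 : B.coeff (s + 1) = 0 := coeff_eq_zero_of_natDegree_lt (by omega)
  have hBs : B.coeff s = Polynomial.C ((-1 : ℂ) ^ s) := by
    have hm : ((X : Polynomial (Polynomial ℂ)) - Polynomial.C X).Monic := monic_X_sub_C _
    have hq : (((X : Polynomial (Polynomial ℂ)) - Polynomial.C X) ^ s).coeff s = 1 := by
      have h := (hm.pow s).coeff_natDegree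
      rwa [hm.natDegree_pow, natDegree_X_sub_C, mul_one] at h
    have hneg : (Polynomial.C (Polynomial.C (-1 : ℂ))) = (-1 : Polynomial (Polynomial ℂ)) := by
      simp
    have hBe : B = Polynomial.C ((Polynomial.C (-1 : ℂ))) ^ s
        * ((X : Polynomial (Polynomial ℂ)) - Polynomial.C X) ^ s := by
      rw [hB, ← mul_pow, hneg]
      ring_nf
    rw [hBe, ← map_pow, coeff_C_mul, hq, mul_one, ← map_pow]
  rw [Qpoly, add_mul, ← hB, coeff_add, coeff_C_mul, hB1, mul_zero, zero_add, mul_assoc,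
    coeff_C_mul, coeff_X_mul, hBs, ← map_mul]

lemma Qpoly_coeff_eq_zero (b : ℂ) {i j : ℕ} (h : i + 1 < j) : (Qpoly b i).coeff j = 0 :=
  coeff_eq_zero_of_natDegree_lt (lt_of_le_of_lt (Qpoly_natDegree_le b i) h)

/-- for `λ ≠ 0`, `b ≠ 1` and an irreducible Virasoro module `V` on which each
vector is killed by all `d_l` with `l` large, the tensor product `Ω(λ,b) ⊗ V` with the
diagonal action is an irreducible Virasoro module. -/
theorem omega_tensor_irreducible {V : Type*} [AddCommGroup V] [Module ℂ V] [Nontrivial V]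
    (lam b : ℂ) (hlam : lam ≠ 0) (hb : b ≠ 1)
    (d : ℤ → Module.End ℂ V) (cV : Module.End ℂ V) (hrep : VirRep d cV)
    (hirr : ∀ p : Submodule ℂ V, VirInvariant d cV p → p = ⊥ ∨ p = ⊤)
    (hnil : ∀ v : V, ∃ K : ℤ, ∀ l : ℤ, K ≤ l → d l v = 0) :
    Nontrivial (Polynomial ℂ ⊗[ℂ] V) ∧
      ∀ M : Submodule ℂ (Polynomial ℂ ⊗[ℂ] V),
        VirInvariant (tensorD (omegaD lam b) d) (tensorC 0 cV) M → M = ⊥ ∨ M = ⊤ := by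
  classical
  obtain ⟨v0, hv0⟩ := exists_ne (0 : V)
  have hnontriv : Nontrivial (Polynomial ℂ ⊗[ℂ] V) := by
    refine ⟨⟨(1 : Polynomial ℂ) ⊗ₜ v0, 0, fun h => hv0 ?_⟩⟩
    have h2 := congrArg (Ecoeff 0) h
    rwa [Ecoeff_tmul, map_zero, coeff_one_zero, one_smul] at h2
  refine ⟨hnontriv, fun M hM => ?_⟩
  by_cases hbot : M = ⊥
  · exact Or.inl hbot
  right
  obtain ⟨hMd, hMc⟩ := hM
  -- basic membership facts
  have hCmem : ∀ (a : ℂ) (z : V), (1 : Polynomial ℂ) ⊗ₜ z ∈ M →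
      (Polynomial.C a) ⊗ₜ[ℂ] z ∈ M := by
    intro a z hz
    rw [show (Polynomial.C a : Polynomial ℂ) = a • (1 : Polynomial ℂ) from by
      rw [smul_eq_C_mul, mul_one], ← smul_tmul']
    exact M.smul_mem a hz
  have hXmem : ∀ z : V, (1 : Polynomial ℂ) ⊗ₜ z ∈ M → (X : Polynomial ℂ) ⊗ₜ z ∈ M := by
    intro z hz
    obtain ⟨k0, hk0⟩ := hnil z
    have h1 := hMd k0 _ hz
    rw [tensorD_tmul, hk0 k0 le_rfl, tmul_zero, add_zero, omegaD_one, ← smul_tmul'] at h1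
    have h2 := M.smul_mem (lam ^ k0)⁻¹ h1
    rw [inv_smul_smul₀ (zpow_ne_zero k0 hlam)] at h2
    have h3 := M.sub_mem h2 (hCmem ((k0 : ℂ) * (b - 1)) z hz)
    rwa [← sub_tmul, add_sub_cancel_right] at h3
  have hdmem : ∀ z : V, (1 : Polynomial ℂ) ⊗ₜ z ∈ M → ∀ n : ℤ,
      (1 : Polynomial ℂ) ⊗ₜ (d n z) ∈ M := by
    intro z hz n
    have h1 := hMd n _ hz
    rw [tensorD_tmul, omegaD_one] at h1
    have h2 : (lam ^ n • ((X : Polynomial ℂ) + Polynomial.C ((n : ℂ) * (b - 1)))) ⊗ₜ[ℂ] z ∈ M := by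
      rw [← smul_tmul', add_tmul]
      exact M.smul_mem _ (M.add_mem (hXmem z hz) (hCmem _ z hz))
    have h3 := M.sub_mem h1 h2
    rwa [add_sub_cancel_left] at h3
  -- Step 1: find v ≠ 0 with 1 ⊗ v ∈ M
  obtain ⟨w, hwM, hw0⟩ := (Submodule.ne_bot_iff M).mp hbot
  obtain ⟨N, hN, hNrep⟩ := tensor_rep w
  have hex : ∃ n, Ecoeff n w ≠ 0 := by
    by_contra hcon
    push_neg at hcon
    exact hw0 (by rw [hNrep]; simp [hcon])
  obtain ⟨n0, hn0⟩ := hex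
  have hn0N : n0 ≤ N := by
    by_contra hcon
    exact hn0 (hN n0 (by omega))
  set s := Nat.findGreatest (fun n => Ecoeff n w ≠ 0) N with hs
  have hvs : Ecoeff s w ≠ (0 : V) :=
    Nat.findGreatest_spec (P := fun n => Ecoeff n w ≠ 0) hn0N hn0
  have hsN : s ≤ N := Nat.findGreatest_le N
  set v : ℕ → V := fun i => Ecoeff i w with hv
  have hreps : w = ∑ i ∈ Finset.range (s + 1), ((X : Polynomial ℂ) ^ i) ⊗ₜ[ℂ] v i := by
    rw [hNrep]
    refine (Finset.sum_subset (Finset.range_subset_range.mpr (by omega)) ?_).symm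
    intro i hi hi'
    simp only [Finset.mem_range] at hi hi'
    have hgt := Nat.findGreatest_is_greatest (P := fun n => Ecoeff n w ≠ 0) (n := N)
      (show s < i by omega) (show i ≤ N by omega)
    rw [not_not.mp hgt, tmul_zero]
  choose kk hkk using fun i => hnil (v i)
  set K : ℤ := (∑ i ∈ Finset.range (s + 1), |kk i|) + 1 with hK
  have hKk : ∀ i ∈ Finset.range (s + 1), ∀ l : ℤ, K ≤ l → d l (v i) = 0 := by
    intro i hi l hl
    apply hkk
    have h1 : |kk i| ≤ ∑ j ∈ Finset.range (s + 1), |kk j| :=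
      Finset.single_le_sum (f := fun j => |kk j|) (fun j _ => abs_nonneg _) hi
    have h2 := le_abs_self (kk i)
    omega
  set u : ℕ → Polynomial ℂ ⊗[ℂ] V :=
    fun j => ∑ i ∈ Finset.range (s + 1), ((Qpoly b i).coeff j) ⊗ₜ[ℂ] v i with hu
  have hmem : ∀ l : ℤ, K ≤ l → (∑ j ∈ Finset.range (s + 2), (l : ℂ) ^ j • u j) ∈ M := by
    intro l hl
    have hD : tensorD (omegaD lam b) d l w
        = lam ^ l • ∑ i ∈ Finset.range (s + 1),
            ((Qpoly b i).eval (Polynomial.C (l : ℂ))) ⊗ₜ[ℂ] v i := by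
      rw [hreps, map_sum, Finset.smul_sum]
      refine Finset.sum_congr rfl fun i hi => ?_
      rw [tensorD_tmul, hKk i hi l hl, tmul_zero, add_zero, omegaD_X_pow, Qpoly_eval,
        smul_tmul']
    have hsum : (∑ j ∈ Finset.range (s + 2), (l : ℂ) ^ j • u j)
        = ∑ i ∈ Finset.range (s + 1),
            ((Qpoly b i).eval (Polynomial.C (l : ℂ))) ⊗ₜ[ℂ] v i := by
      calc ∑ j ∈ Finset.range (s + 2), (l : ℂ) ^ j • u j
          = ∑ j ∈ Finset.range (s + 2), ∑ i ∈ Finset.range (s + 1),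
              ((l : ℂ) ^ j • (Qpoly b i).coeff j) ⊗ₜ[ℂ] v i := by
            refine Finset.sum_congr rfl fun j _ => ?_
            rw [hu]
            simp only
            rw [Finset.smul_sum]
            exact Finset.sum_congr rfl fun i _ => smul_tmul' _ _ _
        _ = ∑ i ∈ Finset.range (s + 1), ∑ j ∈ Finset.range (s + 2),
              ((l : ℂ) ^ j • (Qpoly b i).coeff j) ⊗ₜ[ℂ] v i := Finset.sum_comm
        _ = ∑ i ∈ Finset.range (s + 1),
              ((Qpoly b i).eval (Polynomial.C (l : ℂ))) ⊗ₜ[ℂ] v i := by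
            refine Finset.sum_congr rfl fun i hi => ?_
            rw [← sum_tmul]
            congr 1
            have hile : i ≤ s := by
              simp only [Finset.mem_range] at hi; omega
            have hdeg : (Qpoly b i).natDegree < s + 2 := by
              have := Qpoly_natDegree_le b i
              omega
            rw [eval_eq_sum_range' hdeg]
            refine Finset.sum_congr rfl fun j _ => ?_
            rw [← map_pow, mul_comm, ← smul_eq_C_mul]
    have hDm := hMd l w hwM
    rw [hD] at hDm
    have h5 := M.smul_mem (lam ^ l)⁻¹ hDm
    rw [inv_smul_smul₀ (zpow_ne_zero l hlam)] at h5
    rw [hsum]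
    exact h5
  have hutop : u (s + 1) ∈ M := sum_pow_smul_mem M (s + 1) u K hmem
  have hueq : u (s + 1) = ((b - 1) * (-1 : ℂ) ^ s) • ((1 : Polynomial ℂ) ⊗ₜ[ℂ] v s) := by
    rw [hu]
    simp only
    rw [Finset.sum_range_succ]
    have hz : ∀ i ∈ Finset.range s, ((Qpoly b i).coeff (s + 1)) ⊗ₜ[ℂ] v i = 0 := by
      intro i hi
      simp only [Finset.mem_range] at hi
      rw [Qpoly_coeff_eq_zero b (by omega), zero_tmul]
    rw [Finset.sum_eq_zero hz, zero_add, Qpoly_coeff_top,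
      show (Polynomial.C ((b - 1) * (-1 : ℂ) ^ s)) = ((b - 1) * (-1 : ℂ) ^ s) • (1 : Polynomial ℂ)
        from by rw [smul_eq_C_mul, mul_one], ← smul_tmul']
  have honeS : (1 : Polynomial ℂ) ⊗ₜ[ℂ] v s ∈ M := by
    have hne : ((b - 1) * (-1 : ℂ) ^ s) ≠ 0 :=
      mul_ne_zero (sub_ne_zero.mpr hb) (pow_ne_zero _ (neg_ne_zero.mpr one_ne_zero))
    rw [hueq] at hutop
    have h2 := M.smul_mem ((b - 1) * (-1 : ℂ) ^ s)⁻¹ hutop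
    rwa [inv_smul_smul₀ hne] at h2
  -- Step 2: the set of z with 1 ⊗ z ∈ M is an invariant submodule, hence everything
  set Nsub : Submodule ℂ V := M.comap (TensorProduct.mk ℂ (Polynomial ℂ) V 1) with hNsub
  have hmemN : ∀ z : V, z ∈ Nsub ↔ (1 : Polynomial ℂ) ⊗ₜ[ℂ] z ∈ M := fun z => Iff.rfl
  have hinv : VirInvariant d cV Nsub := by
    constructor
    · intro i z hzN
      exact (hmemN _).mpr (hdmem z ((hmemN z).mp hzN) i)
    · intro z hzN
      have h1 := hMc _ ((hmemN z).mp hzN)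
      rw [show tensorC (0 : Module.End ℂ (Polynomial ℂ)) cV ((1 : Polynomial ℂ) ⊗ₜ[ℂ] z)
          = (1 : Polynomial ℂ) ⊗ₜ[ℂ] (cV z) from by simp [tensorC]] at h1
      exact (hmemN _).mpr h1
  have hone : ∀ z : V, (1 : Polynomial ℂ) ⊗ₜ[ℂ] z ∈ M := by
    rcases hirr Nsub hinv with hNbot | hNtop
    · exfalso
      have hmm : v s ∈ Nsub := (hmemN _).mpr honeS
      rw [hNbot] at hmm
      exact hvs (by simpa using hmm)
    · intro z
      exact (hmemN z).mp (by rw [hNtop]; trivial)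
  -- Step 3: all X^k ⊗ z are in M
  have hlow : ∀ (m : ℕ), (∀ j, j ≤ m → ∀ z : V, ((X : Polynomial ℂ) ^ j) ⊗ₜ[ℂ] z ∈ M) →
      ∀ p : Polynomial ℂ, p.natDegree ≤ m → ∀ z : V, p ⊗ₜ[ℂ] z ∈ M := by
    intro m hm p hp z
    have hrepp : p ⊗ₜ[ℂ] z
        = ∑ i ∈ Finset.range (m + 1), (p.coeff i) • (((X : Polynomial ℂ) ^ i) ⊗ₜ[ℂ] z) := by
      conv_lhs => rw [p.as_sum_range' (m + 1) (by omega)]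
      rw [sum_tmul]
      exact Finset.sum_congr rfl fun i _ => by
        rw [← C_mul_X_pow_eq_monomial, ← smul_eq_C_mul, smul_tmul']
    rw [hrepp]
    exact Submodule.sum_mem M fun i hi => M.smul_mem _
      (hm i (by simp only [Finset.mem_range] at hi; omega) z)
  have hpow : ∀ (k : ℕ) (j : ℕ), j ≤ k → ∀ z : V, ((X : Polynomial ℂ) ^ j) ⊗ₜ[ℂ] z ∈ M := by
    intro k
    induction k with
    | zero =>
      intro j hj z
      interval_cases j
      rw [pow_zero]
      exact hone z
    | succ m ih =>
      intro j hj z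
      by_cases hjm : j ≤ m
      · exact ih j hjm z
      have hj1 : j = m + 1 := by omega
      subst hj1
      obtain ⟨k0, hk0⟩ := hnil z
      have h1 := hMd k0 _ (ih m le_rfl z)
      rw [tensorD_tmul, hk0 k0 le_rfl, tmul_zero, add_zero, omegaD_X_pow, ← smul_tmul'] at h1
      have h2 := M.smul_mem (lam ^ k0)⁻¹ h1
      rw [inv_smul_smul₀ (zpow_ne_zero k0 hlam)] at h2
      set q : Polynomial ℂ :=
        (X + Polynomial.C ((k0 : ℂ) * (b - 1))) * (X - Polynomial.C (k0 : ℂ)) ^ m with hq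
      have hmon : q.Monic := (monic_X_add_C _).mul ((monic_X_sub_C _).pow _)
      have hdq : q.natDegree = m + 1 := by
        rw [hq, Monic.natDegree_mul (monic_X_add_C _) ((monic_X_sub_C _).pow _),
          natDegree_X_add_C, (monic_X_sub_C _).natDegree_pow, natDegree_X_sub_C, mul_one]
        omega
      have hsplit : ((X : Polynomial ℂ) ^ (m + 1)) ⊗ₜ[ℂ] z = q ⊗ₜ[ℂ] z - q.eraseLead ⊗ₜ[ℂ] z := by
        rw [← sub_tmul]
        congr 1
        have h3 := q.eraseLead_add_monomial_natDegree_leadingCoeff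
        rw [hmon.leadingCoeff, hdq, ← X_pow_eq_monomial] at h3
        exact eq_sub_of_add_eq' h3
      rw [hsplit]
      refine M.sub_mem h2 (hlow m (fun j' hj' z' => ih j' hj' z') q.eraseLead ?_ z)
      have h4 := q.eraseLead_natDegree_le
      omega
  rw [Submodule.eq_top_iff']
  intro x
  induction x using TensorProduct.induction_on with
  | zero => exact M.zero_mem
  | tmul p z => exact hlow p.natDegree (fun j hj z' => hpow p.natDegree j hj z') p le_rfl z
  | add a c ha hc => exact M.add_mem ha hc
end

section
/- Let λ ∈ ℂ*, b ∈ ℂ \ {1}, and V a Virasoro module on which each d_l with l sufficiently large acts locally nilpotently pointwise (for each v there is K with d_l v = 0 for l ≥ K). If M is a nonzero submodule of Ω(λ,b) ⊗ V and w = Σ_{j=0}^s ∂^j ⊗ v_j ∈ M with v_s ≠ 0 and s minimal among nonzero elements of M, then s = 0; i.e. M contains a nonzero element of the form 1 ⊗ v. -/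
open Polynomial TensorProduct

noncomputable def Qp (b : ℂ) (j : ℕ) : Polynomial (Polynomial ℂ) :=
  (Polynomial.C Polynomial.X + Polynomial.C (Polynomial.C (b - 1)) * Polynomial.X) *
    (Polynomial.C Polynomial.X - Polynomial.X) ^ j

lemma Qp_natDegree_le (b : ℂ) (j : ℕ) : (Qp b j).natDegree ≤ j + 1 := by
  unfold Qp
  apply le_trans (natDegree_mul_le)
  have h1 : (Polynomial.C Polynomial.X
      + Polynomial.C (Polynomial.C (b - 1)) * Polynomial.X : Polynomial (Polynomial ℂ)).natDegree ≤ 1 := by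
    apply le_trans (natDegree_add_le _ _)
    simp only [natDegree_C, max_le_iff]
    exact ⟨Nat.zero_le _, le_trans (natDegree_C_mul_le _ _) natDegree_X_le⟩
  have h2 : ((Polynomial.C Polynomial.X - Polynomial.X : Polynomial (Polynomial ℂ)) ^ j).natDegree ≤ j := by
    apply le_trans (natDegree_pow_le)
    have h3 : (Polynomial.C Polynomial.X - Polynomial.X : Polynomial (Polynomial ℂ)).natDegree ≤ 1 := by
      apply le_trans (natDegree_sub_le _ _)
      simp
    nlinarith
  omega

lemma Qp_coeff_top (b : ℂ) (hb : b ≠ 1) (j : ℕ) :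
    (Qp b j).coeff (j + 1) = Polynomial.C ((b - 1) * (-1) ^ j) := by
  have hbne : (Polynomial.C (b - 1) : Polynomial ℂ) ≠ 0 :=
    Polynomial.C_ne_zero.mpr (sub_ne_zero.mpr hb)
  set A : Polynomial (Polynomial ℂ) :=
    Polynomial.C Polynomial.X + Polynomial.C (Polynomial.C (b - 1)) * Polynomial.X with hAdef
  set B : Polynomial (Polynomial ℂ) := Polynomial.C Polynomial.X - Polynomial.X with hBdef
  have hBeq : B = -(Polynomial.X - Polynomial.C Polynomial.X) := by ring
  have hAdeg : A.natDegree = 1 := by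
    rw [hAdef, add_comm, natDegree_add_C, natDegree_C_mul hbne, natDegree_X]
  have hBdeg : B.natDegree = 1 := by
    rw [hBeq, natDegree_neg, natDegree_X_sub_C]
  have hAlc : A.leadingCoeff = Polynomial.C (b - 1) := by
    rw [leadingCoeff, hAdeg, hAdef]
    simp [coeff_C]
  have hBlc : B.leadingCoeff = -1 := by
    rw [hBeq, leadingCoeff_neg, leadingCoeff_X_sub_C]
  have h1 : (Qp b j).coeff (A.natDegree + (B ^ j).natDegree) = A.leadingCoeff * (B^j).leadingCoeff :=
    coeff_mul_degree_add_degree A (B ^ j)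
  rw [natDegree_pow, leadingCoeff_pow, hAdeg, hBdeg, hAlc, hBlc, mul_one] at h1
  rw [add_comm 1 j] at h1
  rw [h1]
  simp

lemma Qp_coeff_zero (b : ℂ) {j k : ℕ} (h : j + 1 < k) : (Qp b j).coeff k = 0 :=
  coeff_eq_zero_of_natDegree_lt (lt_of_le_of_lt (Qp_natDegree_le b j) h)

lemma Qp_eval (b : ℂ) (j : ℕ) (t : ℂ) :
    (Qp b j).eval (Polynomial.C t) =
      (X + Polynomial.C (t * (b - 1))) * (X - Polynomial.C t) ^ j := by
  simp [Qp, mul_comm]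


/-- if `M` is a nonzero submodule of `Ω(λ,b) ⊗ V` and
`w = Σ_{j=0}^s ∂^j ⊗ v_j ∈ M` with `v_s ≠ 0` and `s` minimal among nonzero elements of this
form in `M`, then `s = 0` (so `M` contains a nonzero element `1 ⊗ v`). -/
theorem minimal_degree_is_zero {V : Type*} [AddCommGroup V] [Module ℂ V]
    (lam b : ℂ) (hlam : lam ≠ 0) (hb : b ≠ 1)
    (d : ℤ → Module.End ℂ V) (cV : Module.End ℂ V) (hrep : VirRep d cV)
    (hnil : ∀ v : V, ∃ K : ℤ, ∀ l : ℤ, K ≤ l → d l v = 0)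
    (M : Submodule ℂ (Polynomial ℂ ⊗[ℂ] V))
    (hM : VirInvariant (tensorD (omegaD lam b) d) (tensorC 0 cV) M) (hM0 : M ≠ ⊥)
    (s : ℕ) (v : ℕ → V) (hvs : v s ≠ 0)
    (hw : (∑ j ∈ Finset.range (s + 1), (((X : Polynomial ℂ) ^ j) ⊗ₜ[ℂ] v j)) ∈ M)
    (hmin : ∀ (s' : ℕ) (v' : ℕ → V), v' s' ≠ 0 →
      (∑ j ∈ Finset.range (s' + 1), (((X : Polynomial ℂ) ^ j) ⊗ₜ[ℂ] v' j)) ∈ M → s ≤ s') :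
    s = 0 := by
  classical
  -- choose a uniform bound K
  have hKj : ∀ j : ℕ, ∀ l : ℤ, (hnil (v j)).choose ≤ l → d l (v j) = 0 :=
    fun j => (hnil (v j)).choose_spec
  set K : ℤ := (((Finset.range (s+1)).sup fun j => ((hnil (v j)).choose).toNat : ℕ) : ℤ) with hKdef
  have hKge : ∀ j ∈ Finset.range (s+1), ∀ l : ℤ, K ≤ l → d l (v j) = 0 := by
    intro j hj l hl
    apply hKj
    calc (hnil (v j)).choose ≤ (((hnil (v j)).choose).toNat : ℤ) := Int.self_le_toNat _
      _ ≤ K := by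
          rw [hKdef]
          exact_mod_cast Finset.le_sup (f := fun j => ((hnil (v j)).choose).toNat) hj
      _ ≤ l := hl
  -- step A: membership of the scaled action
  have hmemA : ∀ l : ℤ, K ≤ l →
      (∑ j ∈ Finset.range (s+1),
        ((X + Polynomial.C ((l:ℂ)*(b-1))) * (X - Polynomial.C (l:ℂ))^j) ⊗ₜ[ℂ] v j) ∈ M := by
    intro l hl
    have h1 : tensorD (omegaD lam b) d l
          (∑ j ∈ Finset.range (s+1), ((X : Polynomial ℂ)^j) ⊗ₜ[ℂ] v j)
        = lam ^ l • ∑ j ∈ Finset.range (s+1),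
            ((X + Polynomial.C ((l:ℂ)*(b-1))) * (X - Polynomial.C (l:ℂ))^j) ⊗ₜ[ℂ] v j := by
      rw [tensorD]
      simp only [LinearMap.add_apply, map_sum, LinearMap.rTensor_tmul, LinearMap.lTensor_tmul,
        Finset.smul_sum]
      rw [Finset.sum_congr rfl fun j hj => by rw [hKge j hj l hl, tmul_zero]]
      simp only [add_zero]
      refine Finset.sum_congr rfl fun j hj => ?_
      show lam ^ l • ((X + Polynomial.C ((l:ℂ) * (b-1)))
          * (X^j).comp (X - Polynomial.C (l:ℂ))) ⊗ₜ[ℂ] v j = _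
      rw [pow_comp, X_comp, smul_tmul']
    have h2 := hM.1 l _ hw
    rw [h1] at h2
    have h3 := M.smul_mem ((lam ^ l)⁻¹) h2
    rwa [smul_smul, inv_mul_cancel₀ (zpow_ne_zero _ hlam), one_smul] at h3
  -- the coefficient vectors
  set a : ℕ → Polynomial ℂ ⊗[ℂ] V :=
    fun k => ∑ j ∈ Finset.range (s+1), ((Qp b j).coeff k) ⊗ₜ[ℂ] v j with hadef
  -- step C: expansion in powers of l
  have hexp : ∀ t : ℂ,
      (∑ j ∈ Finset.range (s+1),
          ((X + Polynomial.C (t*(b-1))) * (X - Polynomial.C t)^j) ⊗ₜ[ℂ] v j)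
      = ∑ k ∈ Finset.range (s+2), t^k • a k := by
    intro t
    have hterm : ∀ j ∈ Finset.range (s+1),
        ((X + Polynomial.C (t*(b-1))) * (X - Polynomial.C t)^j) ⊗ₜ[ℂ] v j
        = ∑ k ∈ Finset.range (s+2), t^k • (((Qp b j).coeff k) ⊗ₜ[ℂ] v j) := by
      intro j hj
      have hdeg : (Qp b j).natDegree < s + 2 := by
        have h1 := Qp_natDegree_le b j
        have hj' := Finset.mem_range.mp hj
        omega
      have he := Polynomial.eval_eq_sum_range' hdeg (Polynomial.C t)
      rw [Qp_eval] at he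
      rw [he, sum_tmul]
      refine Finset.sum_congr rfl fun k _ => ?_
      rw [← Polynomial.C_pow, mul_comm, ← Polynomial.smul_eq_C_mul, smul_tmul']
    rw [Finset.sum_congr rfl hterm, Finset.sum_comm]
    simp [Finset.smul_sum, hadef]
  -- step D: Vandermonde extraction of a (s+1)
  have hmemTop : a (s+1) ∈ M := by
    have hmem : ∀ i : Fin (s+2), (∑ k ∈ Finset.range (s+2), ((K:ℂ)+i)^k • a k) ∈ M := by
      intro i
      have h1 := hmemA (K + i) (by omega)
      have h2 := hexp ((K + (i:ℕ) : ℤ) : ℂ)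
      rw [h2] at h1
      have h3 : (((K + (i:ℕ) : ℤ)) : ℂ) = (K:ℂ) + i := by push_cast; ring
      rwa [h3] at h1
    set vA : Fin (s+2) → ℂ := fun i => (K:ℂ) + i with hvA
    set Amat : Matrix (Fin (s+2)) (Fin (s+2)) ℂ := Matrix.vandermonde vA with hAmat
    have hdet : Amat.det ≠ 0 := by
      rw [hAmat, Matrix.det_vandermonde]
      rw [Finset.prod_ne_zero_iff]
      intro i _
      rw [Finset.prod_ne_zero_iff]
      intro j hj
      have hij : i < j := Finset.mem_Ioi.mp hj
      have h4 : vA j - vA i = ((j:ℕ):ℂ) - ((i:ℕ):ℂ) := by rw [hvA]; ring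
      rw [h4, sub_ne_zero]
      intro h
      have h3 : (j:ℕ) = (i:ℕ) := Nat.cast_injective h
      exact absurd (Fin.ext h3) (ne_of_gt hij)
    have hinv : Amat⁻¹ * Amat = 1 := Matrix.nonsing_inv_mul _ (isUnit_iff_ne_zero.mpr hdet)
    set k₀ : Fin (s+2) := Fin.last (s+1) with hk₀
    have hmem2 : ∀ i : Fin (s+2), (∑ k : Fin (s+2), Amat i k • a k) ∈ M := by
      intro i
      have := hmem i
      rwa [← Fin.sum_univ_eq_sum_range (fun k => ((K:ℂ)+i)^k • a k) (s+2)] at this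
    have hsum : ∑ i : Fin (s+2), (Amat⁻¹ k₀ i) • (∑ k : Fin (s+2), Amat i k • a k) = a (s+1) := by
      simp_rw [Finset.smul_sum, smul_smul]
      rw [Finset.sum_comm]
      have hBA : ∀ k : Fin (s+2), (∑ i : Fin (s+2), Amat⁻¹ k₀ i * Amat i k)
          = if k₀ = k then 1 else 0 := by
        intro k
        rw [← Matrix.mul_apply, hinv, Matrix.one_apply]
      calc ∑ k : Fin (s+2), ∑ i : Fin (s+2), (Amat⁻¹ k₀ i * Amat i k) • a k
          = ∑ k : Fin (s+2), (∑ i : Fin (s+2), Amat⁻¹ k₀ i * Amat i k) • a k := by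
            simp_rw [Finset.sum_smul]
        _ = ∑ k : Fin (s+2), (if k₀ = k then (1:ℂ) else 0) • a k := by simp_rw [hBA]
        _ = a (s+1) := by
            simp only [ite_smul, one_smul, zero_smul]
            rw [Finset.sum_ite_eq]
            simp [hk₀, Fin.last]
    rw [← hsum]
    exact Submodule.sum_mem M fun i _ => Submodule.smul_mem M _ (hmem2 i)
  -- step E: identify a (s+1)
  have htop : a (s+1) = ((b-1) * (-1)^s) • ((1 : Polynomial ℂ) ⊗ₜ[ℂ] v s) := by
    rw [hadef]
    show (∑ j ∈ Finset.range (s+1), ((Qp b j).coeff (s+1)) ⊗ₜ[ℂ] v j) = _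
    rw [Finset.sum_range_succ]
    rw [Finset.sum_congr rfl (fun j hj => by
      rw [Qp_coeff_zero b (by have := Finset.mem_range.mp hj; omega), zero_tmul])]
    rw [Finset.sum_const_zero, zero_add, Qp_coeff_top b hb s]
    rw [show (Polynomial.C ((b-1)*(-1:ℂ)^s)) = ((b-1)*(-1:ℂ)^s) • (1:Polynomial ℂ) by
      rw [Polynomial.smul_eq_C_mul, mul_one], smul_tmul']
  have hscal : ((b-1) * (-1:ℂ)^s) ≠ 0 :=
    mul_ne_zero (sub_ne_zero.mpr hb) (pow_ne_zero _ (by norm_num))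
  have h1v : (1 : Polynomial ℂ) ⊗ₜ[ℂ] v s ∈ M := by
    have h5 := M.smul_mem (((b-1)*(-1:ℂ)^s)⁻¹) hmemTop
    rw [htop] at h5
    rwa [smul_smul, inv_mul_cancel₀ hscal, one_smul] at h5
  have hfin := hmin 0 (fun _ => v s) hvs (by simpa using h1v)
  omega
end

section
/- Let φ : Ω(λ,b) ⊗ V → Ω(λ',b') ⊗ V' be an isomorphism of Virasoro modules (with λ, λ' ∈ ℂ*, b, b' ≠ 1, and V, V' as in the isomorphism theorem) satisfying φ(1 ⊗ v) = 1 ⊗ τ(v) for a bijective linear map τ : V → V'. Then φ(∂ ⊗ v) = ∂ ⊗ τ(v) for all v ∈ V, and τ is a Virasoro module isomorphism: τ(d_j v) = d_j τ(v) for all j ∈ ℤ and τ(c v) = c τ(v). -/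
open Polynomial TensorProduct

/-- Extraction of the `k`-th coefficient: `f ⊗ w ↦ f.coeff k • w`. -/
noncomputable def extMap (k : ℕ) (W : Type*) [AddCommGroup W] [Module ℂ W] :
    (Polynomial ℂ ⊗[ℂ] W) →ₗ[ℂ] W :=
  (TensorProduct.lid ℂ W).toLinearMap ∘ₗ LinearMap.rTensor W (Polynomial.lcoeff ℂ k)

lemma extMap_tmul (k : ℕ) {W : Type*} [AddCommGroup W] [Module ℂ W] (f : Polynomial ℂ) (w : W) :
    extMap k W (f ⊗ₜ[ℂ] w) = f.coeff k • w := by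
  simp [extMap]

lemma tD_one {W : Type*} [AddCommGroup W] [Module ℂ W] (lam b : ℂ) (dW : ℤ → Module.End ℂ W)
    (i : ℤ) (w : W) :
    tensorD (omegaD lam b) dW i ((1 : Polynomial ℂ) ⊗ₜ[ℂ] w) =
      lam ^ i • ((X : Polynomial ℂ) ⊗ₜ[ℂ] w)
        + ((i : ℂ) * (b - 1) * lam ^ i) • ((1 : Polynomial ℂ) ⊗ₜ[ℂ] w)
        + (1 : Polynomial ℂ) ⊗ₜ[ℂ] (dW i w) := by
  simp only [tensorD, LinearMap.add_apply, LinearMap.rTensor_tmul, LinearMap.lTensor_tmul]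
  congr 1
  have h1 : (omegaD lam b i) (1 : Polynomial ℂ) = lam ^ i • (X + Polynomial.C ((i:ℂ)*(b-1))) := by
    show lam ^ i • ((X + Polynomial.C ((i : ℂ) * (b - 1))) *
      (1:Polynomial ℂ).comp (X - Polynomial.C (i : ℂ))) = _
    rw [one_comp, mul_one]
  rw [h1]
  have hC : (Polynomial.C ((i:ℂ)*(b-1)) : Polynomial ℂ) = ((i:ℂ)*(b-1)) • (1 : Polynomial ℂ) := by
    rw [Polynomial.smul_eq_C_mul, mul_one]
  rw [hC, ← TensorProduct.smul_tmul', TensorProduct.add_tmul, ← TensorProduct.smul_tmul']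
  module

lemma smul_cancel {W : Type*} [AddCommGroup W] [Module ℂ W] {a c : ℂ} {w : W} (hw : w ≠ 0)
    (h : a • w = c • w) : a = c := by
  have h2 : (a - c) • w = 0 := by rw [sub_smul, h, sub_self]
  rcases smul_eq_zero.mp h2 with h3 | h3
  · exact sub_eq_zero.mp h3
  · exact absurd h3 hw

/-- if an isomorphism `φ` of `Ω(λ,b) ⊗ V` with `Ω(λ',b') ⊗ V'` satisfies
`φ(1 ⊗ v) = 1 ⊗ τ(v)` for a bijective linear map `τ : V → V'`, then
`φ(∂ ⊗ v) = ∂ ⊗ τ(v)` and `τ` is a Virasoro module isomorphism. -/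
theorem iso_restricts_to_tau {V V' : Type*}
    [AddCommGroup V] [Module ℂ V] [Nontrivial V]
    [AddCommGroup V'] [Module ℂ V'] [Nontrivial V']
    (lam lam' b b' : ℂ) (hlam : lam ≠ 0) (hlam' : lam' ≠ 0) (hb : b ≠ 1) (hb' : b' ≠ 1)
    (d : ℤ → Module.End ℂ V) (cV : Module.End ℂ V) (hrep : VirRep d cV)
    (hirr : ∀ p : Submodule ℂ V, VirInvariant d cV p → p = ⊥ ∨ p = ⊤)
    (hnil : ∀ v : V, ∃ K : ℤ, ∀ l : ℤ, K ≤ l → d l v = 0)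
    (d' : ℤ → Module.End ℂ V') (cV' : Module.End ℂ V') (hrep' : VirRep d' cV')
    (hirr' : ∀ p : Submodule ℂ V', VirInvariant d' cV' p → p = ⊥ ∨ p = ⊤)
    (hnil' : ∀ v : V', ∃ K : ℤ, ∀ l : ℤ, K ≤ l → d' l v = 0)
    (φ : (Polynomial ℂ ⊗[ℂ] V) ≃ₗ[ℂ] (Polynomial ℂ ⊗[ℂ] V'))
    (hφ_d : ∀ (i : ℤ) (w : Polynomial ℂ ⊗[ℂ] V),
      φ (tensorD (omegaD lam b) d i w) = tensorD (omegaD lam' b') d' i (φ w))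
    (hφ_c : ∀ w : Polynomial ℂ ⊗[ℂ] V, φ (tensorC 0 cV w) = tensorC 0 cV' (φ w))
    (τ : V ≃ₗ[ℂ] V')
    (hτ : ∀ v : V, φ ((1 : Polynomial ℂ) ⊗ₜ[ℂ] v) = (1 : Polynomial ℂ) ⊗ₜ[ℂ] τ v) :
    (∀ v : V, φ ((X : Polynomial ℂ) ⊗ₜ[ℂ] v) = (X : Polynomial ℂ) ⊗ₜ[ℂ] τ v) ∧
      (∀ (j : ℤ) (v : V), τ (d j v) = d' j (τ v)) ∧ ∀ v : V, τ (cV v) = cV' (τ v) := by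
  -- the key relation coming from applying `hφ_d` to `1 ⊗ v`
  have key : ∀ (v : V) (i : ℤ), d i v = 0 → d' i (τ v) = 0 →
      lam ^ i • φ ((X : Polynomial ℂ) ⊗ₜ[ℂ] v)
          + ((i : ℂ) * (b - 1) * lam ^ i) • ((1 : Polynomial ℂ) ⊗ₜ[ℂ] τ v)
        = lam' ^ i • ((X : Polynomial ℂ) ⊗ₜ[ℂ] τ v)
          + ((i : ℂ) * (b' - 1) * lam' ^ i) • ((1 : Polynomial ℂ) ⊗ₜ[ℂ] τ v) := by
    intro v i h0 h0'
    have h := hφ_d i ((1 : Polynomial ℂ) ⊗ₜ[ℂ] v)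
    rw [tD_one, hτ, tD_one, h0, h0', tmul_zero, tmul_zero, add_zero, add_zero,
      map_add, map_smul, map_smul, hτ] at h
    exact h
  -- pick a nonzero vector to show `lam' = lam` and `b' = b`
  obtain ⟨v0, hv0⟩ := exists_ne (0 : V)
  have hτv0 : τ v0 ≠ 0 := by
    simp only [ne_eq, LinearEquiv.map_eq_zero_iff]
    exact hv0
  obtain ⟨K, hK⟩ := hnil v0
  obtain ⟨K', hK'⟩ := hnil' (τ v0)
  set N : ℤ := max K K' with hNdef
  have hdN : d N v0 = 0 := hK N (le_max_left _ _)
  have hdN1 : d (N + 1) v0 = 0 := hK (N + 1) (le_trans (le_max_left _ _) (by linarith))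
  have hdN' : d' N (τ v0) = 0 := hK' N (le_max_right _ _)
  have hdN1' : d' (N + 1) (τ v0) = 0 := hK' (N + 1) (le_trans (le_max_right _ _) (by linarith))
  have keyN := key v0 N hdN hdN'
  have keyN1 := key v0 (N + 1) hdN1 hdN1'
  -- extract the first coefficient to prove `lam' = lam`
  have c1N := congrArg (extMap 1 V') keyN
  have c1N1 := congrArg (extMap 1 V') keyN1
  simp only [map_add, map_smul, extMap_tmul, coeff_X_one, coeff_one, one_ne_zero, if_false,
    one_smul, zero_smul, smul_zero, add_zero] at c1N c1N1
  -- c1N : lam ^ N • extMap 1 V' (φ (X ⊗ v0)) = lam' ^ N • τ v0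
  have hlamN : lam ^ (N : ℤ) ≠ 0 := zpow_ne_zero _ hlam
  have hlamN' : lam' ^ (N : ℤ) ≠ 0 := zpow_ne_zero _ hlam'
  have hEq : (lam * lam' ^ N) • τ v0 = (lam' ^ N * lam') • τ v0 := by
    calc (lam * lam' ^ N) • τ v0 = lam • (lam' ^ N • τ v0) := by rw [mul_smul]
      _ = lam • (lam ^ N • extMap 1 V' (φ ((X : Polynomial ℂ) ⊗ₜ[ℂ] v0))) := by rw [c1N]
      _ = (lam ^ (N + 1)) • extMap 1 V' (φ ((X : Polynomial ℂ) ⊗ₜ[ℂ] v0)) := by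
            rw [← mul_smul, zpow_add_one₀ hlam, mul_comm]
      _ = (lam' ^ (N + 1)) • τ v0 := c1N1
      _ = (lam' ^ N * lam') • τ v0 := by rw [zpow_add_one₀ hlam']
  have h5 := smul_cancel hτv0 hEq
  have hlamEq : lam = lam' := mul_left_cancel₀ hlamN' (by linear_combination h5)
  subst hlamEq
  -- extract the zeroth coefficient to prove `b' = b`
  have c0N := congrArg (extMap 0 V') keyN
  have c0N1 := congrArg (extMap 0 V') keyN1
  simp only [map_add, map_smul, extMap_tmul, coeff_X_zero, Polynomial.coeff_one_zero,
    one_smul, zero_smul, smul_zero, zero_add, add_zero] at c0N c0N1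
  -- c0N : lam ^ N • z + (N (b-1) lam^N) • τv0 = (N (b'-1) lam^N) • τv0
  set z := extMap 0 V' (φ ((X : Polynomial ℂ) ⊗ₜ[ℂ] v0)) with hz
  have hz1 : lam ^ (N : ℤ) • z = ((N : ℂ) * (b' - b) * lam ^ (N : ℤ)) • τ v0 := by
    have : lam ^ (N : ℤ) • z =
        ((N : ℂ) * (b' - 1) * lam ^ (N : ℤ) - (N : ℂ) * (b - 1) * lam ^ (N : ℤ)) • τ v0 := by
      rw [sub_smul, ← c0N]; abel
    rw [this]; congr 1; ring
  have hz2 : lam ^ ((N : ℤ) + 1) • z =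
      (((N : ℂ) + 1) * (b' - b) * lam ^ ((N : ℤ) + 1)) • τ v0 := by
    have : lam ^ ((N : ℤ) + 1) • z =
        (((N : ℤ) + 1 : ℤ) * (b' - 1) * lam ^ ((N : ℤ) + 1)
          - ((N : ℤ) + 1 : ℤ) * (b - 1) * lam ^ ((N : ℤ) + 1)) • τ v0 := by
      rw [sub_smul, ← c0N1]; abel
    rw [this]; congr 1; push_cast; ring
  have hbEq : b = b' := by
    have h1 : (lam * ((N : ℂ) * (b' - b) * lam ^ (N : ℤ))) • τ v0 =
        (((N : ℂ) + 1) * (b' - b) * lam ^ ((N : ℤ) + 1)) • τ v0 := by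
      calc (lam * ((N : ℂ) * (b' - b) * lam ^ (N : ℤ))) • τ v0
          = lam • (((N : ℂ) * (b' - b) * lam ^ (N : ℤ)) • τ v0) := by rw [mul_smul]
        _ = lam • (lam ^ (N : ℤ) • z) := by rw [hz1]
        _ = (lam ^ ((N : ℤ) + 1)) • z := by rw [← mul_smul, zpow_add_one₀ hlam, mul_comm]
        _ = (((N : ℂ) + 1) * (b' - b) * lam ^ ((N : ℤ) + 1)) • τ v0 := hz2
    have h2 := smul_cancel hτv0 h1
    have h3 : (b' - b) * (lam ^ (N : ℤ) * lam) = 0 := by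
      rw [zpow_add_one₀ hlam] at h2
      linear_combination (-1 : ℂ) * h2
    rcases mul_eq_zero.mp h3 with h4 | h4
    · exact (sub_eq_zero.mp h4).symm
    · exact absurd h4 (mul_ne_zero hlamN hlam)
  subst hbEq
  -- now prove `φ (X ⊗ v) = X ⊗ τ v` for every `v`
  have hX : ∀ v : V, φ ((X : Polynomial ℂ) ⊗ₜ[ℂ] v) = (X : Polynomial ℂ) ⊗ₜ[ℂ] τ v := by
    intro v
    obtain ⟨M, hM⟩ := hnil v
    obtain ⟨M', hM'⟩ := hnil' (τ v)
    set P : ℤ := max M M' with hPdef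
    have h := key v P (hM P (le_max_left _ _)) (hM' P (le_max_right _ _))
    have h2 : lam ^ (P : ℤ) • φ ((X : Polynomial ℂ) ⊗ₜ[ℂ] v) =
        lam ^ (P : ℤ) • ((X : Polynomial ℂ) ⊗ₜ[ℂ] τ v) := add_right_cancel h
    exact smul_right_injective _ (zpow_ne_zero _ hlam) h2
  refine ⟨hX, ?_, ?_⟩
  · intro j v
    have h := hφ_d j ((1 : Polynomial ℂ) ⊗ₜ[ℂ] v)
    rw [hτ, tD_one, tD_one, map_add, map_add, map_smul, map_smul, hX v] at h
    rw [hτ] at h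
    have h3 := add_left_cancel h
    have h4 := congrArg (extMap 0 V') h3
    simpa [hτ, extMap_tmul] using h4
  · intro v
    have h := hφ_c ((1 : Polynomial ℂ) ⊗ₜ[ℂ] v)
    have hL : tensorC (0 : Module.End ℂ (Polynomial ℂ)) cV ((1 : Polynomial ℂ) ⊗ₜ[ℂ] v) =
        (1 : Polynomial ℂ) ⊗ₜ[ℂ] cV v := by
      simp [tensorC]
    have hR : tensorC (0 : Module.End ℂ (Polynomial ℂ)) cV' ((1 : Polynomial ℂ) ⊗ₜ[ℂ] τ v) =
        (1 : Polynomial ℂ) ⊗ₜ[ℂ] cV' (τ v) := by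
      simp [tensorC]
    rw [hL, hτ, hτ] at h
    rw [hR] at h
    have h4 := congrArg (extMap 0 V') h
    simpa [hτ, extMap_tmul] using h4
end

section
/- For s ∈ ℤ_+ and l, m ∈ ℤ, define ω_{l,m}^{(s)} = Σ_{i=0}^s binom(s,i) (-1)^{s-i} d_{l-m-i} d_{m+i} in the universal enveloping algebra of the Virasoro algebra. Then for every λ ∈ ℂ*, b ∈ ℂ, s ≥ 1, and l, m ∈ ℤ, the operator ω_{l,m}^{(s)} annihilates the module Ω(λ,b): ω_{l,m}^{(s)} · f = 0 for all f ∈ ℂ[∂]. -/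
open Polynomial TensorProduct

section Aux

lemma altS0 (s : ℕ) (hs : 1 ≤ s) :
    ∑ i ∈ Finset.range (s + 1), ((s.choose i : ℂ) * (-1 : ℂ) ^ (s - i)) = 0 := by
  have h := Int.alternating_sum_range_choose (n := s)
  rw [if_neg (by omega)] at h
  have h' : ∑ i ∈ Finset.range (s + 1), (-1 : ℂ) ^ i * (s.choose i : ℂ) = 0 := by
    have := congrArg (fun z : ℤ => (z : ℂ)) h
    push_cast at this
    simpa using this
  calc ∑ i ∈ Finset.range (s + 1), ((s.choose i : ℂ) * (-1 : ℂ) ^ (s - i))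
      = ∑ i ∈ Finset.range (s + 1), (-1 : ℂ) ^ s * ((-1 : ℂ) ^ i * (s.choose i : ℂ)) := by
        refine Finset.sum_congr rfl fun i hi => ?_
        have hi' : i ≤ s := Nat.lt_succ_iff.mp (Finset.mem_range.mp hi)
        have h1 : (-1 : ℂ) ^ (s - i) * (-1 : ℂ) ^ i = (-1 : ℂ) ^ s := by
          rw [← pow_add, Nat.sub_add_cancel hi']
        have h2 : ((-1 : ℂ) ^ i) * ((-1 : ℂ) ^ i) = 1 := by rw [← mul_pow]; norm_num
        have hpow : (-1 : ℂ) ^ (s - i) = (-1 : ℂ) ^ s * (-1 : ℂ) ^ i := by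
          calc (-1 : ℂ) ^ (s - i)
              = (-1 : ℂ) ^ (s - i) * (((-1 : ℂ) ^ i) * ((-1 : ℂ) ^ i)) := by rw [h2, mul_one]
            _ = ((-1 : ℂ) ^ (s - i) * (-1 : ℂ) ^ i) * (-1 : ℂ) ^ i := by ring
            _ = (-1 : ℂ) ^ s * (-1 : ℂ) ^ i := by rw [h1]
        rw [hpow]; ring
    _ = (-1 : ℂ) ^ s * ∑ i ∈ Finset.range (s + 1), (-1 : ℂ) ^ i * (s.choose i : ℂ) := by
        rw [Finset.mul_sum]
    _ = 0 := by rw [h']; ring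

lemma altShift (s : ℕ) (hs : 1 ≤ s) (g : ℕ → ℂ) :
    ∑ i ∈ Finset.range (s + 1), ((s.choose i : ℂ) * (-1 : ℂ) ^ (s - i)) * ((i : ℂ) * g i)
      = (s : ℂ) * ∑ j ∈ Finset.range s,
          (((s - 1).choose j : ℂ) * (-1 : ℂ) ^ (s - 1 - j)) * g (j + 1) := by
  obtain ⟨t, rfl⟩ : ∃ t, s = t + 1 := ⟨s - 1, by omega⟩
  rw [Finset.sum_range_succ']
  simp only [Nat.cast_zero, zero_mul, mul_zero, add_zero, Nat.add_sub_cancel]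
  rw [Finset.mul_sum]
  refine Finset.sum_congr rfl fun j hj => ?_
  have hnat := Nat.add_one_mul_choose_eq t j
  have hc : ((t + 1 : ℕ) : ℂ) * (t.choose j : ℂ)
      = ((t + 1).choose (j + 1) : ℂ) * ((j + 1 : ℕ) : ℂ) := by
    exact_mod_cast congrArg (Nat.cast : ℕ → ℂ) hnat
  have hexp : t + 1 - (j + 1) = t - j := by omega
  rw [hexp]
  push_cast at hc ⊢
  linear_combination (-((-1 : ℂ) ^ (t - j) * g (j + 1))) * hc

lemma altS1 (s : ℕ) (hs : 2 ≤ s) :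
    ∑ i ∈ Finset.range (s + 1), ((s.choose i : ℂ) * (-1 : ℂ) ^ (s - i)) * (i : ℂ) = 0 := by
  obtain ⟨t, rfl⟩ : ∃ t, s = t + 1 := ⟨s - 1, by omega⟩
  have h := altShift (t + 1) (by omega) (fun _ => 1)
  simp only [mul_one, Nat.add_sub_cancel] at h
  rw [h, altS0 t (by omega)]
  ring

lemma altS2 (s : ℕ) (hs : 3 ≤ s) :
    ∑ i ∈ Finset.range (s + 1), ((s.choose i : ℂ) * (-1 : ℂ) ^ (s - i)) * (i : ℂ) ^ 2 = 0 := by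
  obtain ⟨t, rfl⟩ : ∃ t, s = t + 1 := ⟨s - 1, by omega⟩
  have h := altShift (t + 1) (by omega) (fun i => (i : ℂ))
  simp only [Nat.add_sub_cancel] at h
  have h2 : ∑ i ∈ Finset.range (t + 1 + 1),
      (((t + 1).choose i : ℂ) * (-1 : ℂ) ^ (t + 1 - i)) * (i : ℂ) ^ 2
      = ∑ i ∈ Finset.range (t + 1 + 1),
        (((t + 1).choose i : ℂ) * (-1 : ℂ) ^ (t + 1 - i)) * ((i : ℂ) * (i : ℂ)) :=
    Finset.sum_congr rfl fun i _ => by ring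
  rw [h2, h]
  have h3 : ∑ j ∈ Finset.range (t + 1),
      ((t.choose j : ℂ) * (-1 : ℂ) ^ (t - j)) * ((j + 1 : ℕ) : ℂ)
      = (∑ j ∈ Finset.range (t + 1), ((t.choose j : ℂ) * (-1 : ℂ) ^ (t - j)) * (j : ℂ))
        + ∑ j ∈ Finset.range (t + 1), ((t.choose j : ℂ) * (-1 : ℂ) ^ (t - j)) := by
    rw [← Finset.sum_add_distrib]
    refine Finset.sum_congr rfl fun j _ => by push_cast; ring
  rw [h3, altS1 t (by omega), altS0 t (by omega)]
  ring

lemma altQuad (s : ℕ) (hs : 3 ≤ s) (a b c : ℂ) :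
    ∑ i ∈ Finset.range (s + 1),
      ((s.choose i : ℂ) * (-1 : ℂ) ^ (s - i)) * (a + b * (i : ℂ) + c * (i : ℂ) ^ 2) = 0 := by
  have h0 := altS0 s (by omega)
  have h1 := altS1 s (by omega)
  have h2 := altS2 s hs
  calc ∑ i ∈ Finset.range (s + 1),
      ((s.choose i : ℂ) * (-1 : ℂ) ^ (s - i)) * (a + b * (i : ℂ) + c * (i : ℂ) ^ 2)
      = a * (∑ i ∈ Finset.range (s + 1), ((s.choose i : ℂ) * (-1 : ℂ) ^ (s - i)))
        + b * (∑ i ∈ Finset.range (s + 1), ((s.choose i : ℂ) * (-1 : ℂ) ^ (s - i)) * (i : ℂ))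
        + c * (∑ i ∈ Finset.range (s + 1),
            ((s.choose i : ℂ) * (-1 : ℂ) ^ (s - i)) * (i : ℂ) ^ 2) := by
        rw [Finset.mul_sum, Finset.mul_sum, Finset.mul_sum, ← Finset.sum_add_distrib,
          ← Finset.sum_add_distrib]
        exact Finset.sum_congr rfl fun i _ => by ring
    _ = 0 := by rw [h0, h1, h2]; ring

lemma omegaD_omegaD (lam b : ℂ) (hlam : lam ≠ 0) (n k : ℤ) (f : Polynomial ℂ) :
    omegaD lam b n (omegaD lam b k f) =
      lam ^ (n + k) •
        (((X + C ((n : ℂ) * (b - 1))) * (X + C ((k : ℂ) * (b - 1) - (n : ℂ)))) *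
          f.comp (X - C ((n + k : ℤ) : ℂ))) := by
  show lam ^ n • ((X + C ((n : ℂ) * (b - 1))) *
      (lam ^ k • ((X + C ((k : ℂ) * (b - 1))) * f.comp (X - C (k : ℂ)))).comp (X - C (n : ℂ))) = _
  rw [smul_comp, mul_comp, add_comp, X_comp, C_comp, comp_assoc]
  have hcomp : (X - C (k : ℂ)).comp (X - C (n : ℂ)) = X - C ((n + k : ℤ) : ℂ) := by
    push_cast
    simp only [sub_comp, X_comp, C_comp]
    rw [sub_sub, ← C_add]
  rw [hcomp, mul_smul_comm, smul_smul, ← zpow_add₀ hlam]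
  congr 1
  rw [← mul_assoc]
  congr 1
  rw [C_sub]
  ring

end Aux

/-- the operator `ω_{l,m}^{(s)} = Σ_{i=0}^s C(s,i) (-1)^{s-i} d_{l-m-i} d_{m+i}`
annihilates the module `Ω(λ,b)` (for `s ≥ 3`). -/
theorem omega_operator_annihilates (lam b : ℂ) (hlam : lam ≠ 0)
    (s : ℕ) (hs : 3 ≤ s) (l m : ℤ) (f : Polynomial ℂ) :
    ∑ i ∈ Finset.range (s + 1),
      ((s.choose i : ℂ) * (-1 : ℂ) ^ (s - i)) •
        omegaD lam b (l - m - (i : ℤ)) (omegaD lam b (m + (i : ℤ)) f) = 0  := by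
  classical
  have hkey : ∀ i ∈ Finset.range (s + 1),
      omegaD lam b (l - m - (i : ℤ)) (omegaD lam b (m + (i : ℤ)) f)
        = lam ^ l • (((X + C (((l : ℂ) - (m : ℂ) - (i : ℂ)) * (b - 1))) *
            (X + C (((m : ℂ) + (i : ℂ)) * (b - 1) - ((l : ℂ) - (m : ℂ) - (i : ℂ))))) *
            f.comp (X - C ((l : ℂ)))) := by
    intro i _
    rw [omegaD_omegaD lam b hlam]
    rw [show l - m - (i : ℤ) + (m + (i : ℤ)) = l from by ring]
    push_cast
    ring_nf
  have hmain : ∑ i ∈ Finset.range (s + 1),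
      ((s.choose i : ℂ) * (-1 : ℂ) ^ (s - i)) •
        omegaD lam b (l - m - (i : ℤ)) (omegaD lam b (m + (i : ℤ)) f)
      = lam ^ l • ((∑ i ∈ Finset.range (s + 1),
          C ((s.choose i : ℂ) * (-1 : ℂ) ^ (s - i)) *
            ((X + C (((l : ℂ) - (m : ℂ) - (i : ℂ)) * (b - 1))) *
              (X + C (((m : ℂ) + (i : ℂ)) * (b - 1) - ((l : ℂ) - (m : ℂ) - (i : ℂ)))))) *
          f.comp (X - C ((l : ℂ)))) := by
    rw [Finset.sum_mul, Finset.smul_sum]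
    refine Finset.sum_congr rfl fun i hi => ?_
    rw [hkey i hi, smul_comm]
    congr 1
    rw [Polynomial.smul_eq_C_mul]
    ring
  rw [hmain]
  have hz : (∑ i ∈ Finset.range (s + 1),
      C ((s.choose i : ℂ) * (-1 : ℂ) ^ (s - i)) *
        ((X + C (((l : ℂ) - (m : ℂ) - (i : ℂ)) * (b - 1))) *
          (X + C (((m : ℂ) + (i : ℂ)) * (b - 1) - ((l : ℂ) - (m : ℂ) - (i : ℂ)))))) = 0 := by
    have e1 : ∀ i ∈ Finset.range (s + 1),
        C ((s.choose i : ℂ) * (-1 : ℂ) ^ (s - i)) *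
          ((X + C (((l : ℂ) - (m : ℂ) - (i : ℂ)) * (b - 1))) *
            (X + C (((m : ℂ) + (i : ℂ)) * (b - 1) - ((l : ℂ) - (m : ℂ) - (i : ℂ)))))
        = C ((s.choose i : ℂ) * (-1 : ℂ) ^ (s - i)) * X ^ 2
          + C (((s.choose i : ℂ) * (-1 : ℂ) ^ (s - i)) *
              ((((l : ℂ) - (m : ℂ) - (i : ℂ)) * (b - 1))
                + (((m : ℂ) + (i : ℂ)) * (b - 1) - ((l : ℂ) - (m : ℂ) - (i : ℂ))))) * X
          + C (((s.choose i : ℂ) * (-1 : ℂ) ^ (s - i)) *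
              ((((l : ℂ) - (m : ℂ) - (i : ℂ)) * (b - 1))
                * (((m : ℂ) + (i : ℂ)) * (b - 1) - ((l : ℂ) - (m : ℂ) - (i : ℂ))))) := by
      intro i _
      simp only [C_mul, C_add, C_sub]
      ring
    rw [Finset.sum_congr rfl e1, Finset.sum_add_distrib, Finset.sum_add_distrib,
      ← Finset.sum_mul, ← Finset.sum_mul, ← map_sum, ← map_sum, ← map_sum]
    have hA : (∑ i ∈ Finset.range (s + 1), ((s.choose i : ℂ) * (-1 : ℂ) ^ (s - i))) = 0 :=
      altS0 s (by omega)
    have hB : (∑ i ∈ Finset.range (s + 1), ((s.choose i : ℂ) * (-1 : ℂ) ^ (s - i)) *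
        ((((l : ℂ) - (m : ℂ) - (i : ℂ)) * (b - 1))
          + (((m : ℂ) + (i : ℂ)) * (b - 1) - ((l : ℂ) - (m : ℂ) - (i : ℂ))))) = 0 := by
      have hq := altQuad s hs ((l : ℂ) * (b - 1) - (l : ℂ) + (m : ℂ)) 1 0
      rw [← hq]
      exact Finset.sum_congr rfl fun i _ => by ring
    have hC : (∑ i ∈ Finset.range (s + 1), ((s.choose i : ℂ) * (-1 : ℂ) ^ (s - i)) *
        ((((l : ℂ) - (m : ℂ) - (i : ℂ)) * (b - 1))
          * (((m : ℂ) + (i : ℂ)) * (b - 1) - ((l : ℂ) - (m : ℂ) - (i : ℂ))))) = 0 := by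
      have hq := altQuad s hs
        ((b - 1) ^ 2 * ((l : ℂ) - (m : ℂ)) * (m : ℂ) - (b - 1) * ((l : ℂ) - (m : ℂ)) ^ 2)
        ((b - 1) ^ 2 * ((l : ℂ) - 2 * (m : ℂ)) + 2 * (b - 1) * ((l : ℂ) - (m : ℂ)))
        (-(b - 1) ^ 2 - (b - 1))
      rw [← hq]
      exact Finset.sum_congr rfl fun i _ => by ring
    rw [hA, hB, hC]
    simp
  rw [hz, zero_mul, smul_zero]
end

section
/- Let λ ∈ ℂ*, λ₁, λ₂, θ ∈ ℂ, b ∈ ℂ, and let V be the classical Whittaker module U(Vir)/I where I is the left ideal generated by c - θ, d₁ - λ₁, d₂ - λ₂, and d_k for k ≥ 3; let v = 1 + I. Then in Ω(λ,b) ⊗ V, for k = 2, 3, 4: (d_k - λ^{k-1} d₁)(1 ⊗ v) = m_k (1 ⊗ v), where m₂ = λ₂ - λλ₁ + λ²(b-1), m₃ = λ²(-λ₁ + 2λ(b-1)), m₄ = λ³(-λ₁ + 3λ(b-1)). -/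
open Polynomial TensorProduct

lemma aux_tmul {V : Type*} [AddCommGroup V] [Module ℂ V] (v : V) (a c : ℂ) :
    (a • ((X : Polynomial ℂ) + Polynomial.C c)) ⊗ₜ[ℂ] v =
      a • ((X : Polynomial ℂ) ⊗ₜ[ℂ] v) + (a * c) • ((1 : Polynomial ℂ) ⊗ₜ[ℂ] v) := by
  have hC : (Polynomial.C c) = c • (1 : Polynomial ℂ) := by
    rw [Polynomial.smul_eq_C_mul, mul_one]
  rw [smul_add, add_tmul, hC, smul_smul, ← smul_tmul', ← smul_tmul']

/-- for the classical Whittaker module `V` with cyclic Whittaker vector `v`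
(`c v = θ v`, `d₁ v = λ₁ v`, `d₂ v = λ₂ v`, `d_k v = 0` for `k ≥ 3`), in `Ω(λ,b) ⊗ V` one
has `(d_k - λ^{k-1} d₁)(1 ⊗ v) = m_k (1 ⊗ v)` for `k = 2, 3, 4`. -/
theorem whittaker_tensor_eigen {V : Type*} [AddCommGroup V] [Module ℂ V]
    (lam lam1 lam2 th b : ℂ) (hlam : lam ≠ 0)
    (d : ℤ → Module.End ℂ V) (cV : Module.End ℂ V) (hrep : VirRep d cV)
    (v : V) (hv : v ≠ 0) (hc : cV v = th • v)
    (h1 : d 1 v = lam1 • v) (h2 : d 2 v = lam2 • v)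
    (h3 : ∀ k : ℤ, 3 ≤ k → d k v = 0)
    (hcyc : ∀ p : Submodule ℂ V, VirInvariant d cV p → v ∈ p → p = ⊤) :
    ∀ k : ℤ, 2 ≤ k → k ≤ 4 →
      tensorD (omegaD lam b) d k ((1 : Polynomial ℂ) ⊗ₜ[ℂ] v) -
          lam ^ (k - 1) • tensorD (omegaD lam b) d 1 ((1 : Polynomial ℂ) ⊗ₜ[ℂ] v) =
        (if k = 2 then lam2 - lam * lam1 + lam ^ 2 * (b - 1)
          else if k = 3 then lam ^ 2 * (-lam1 + 2 * lam * (b - 1))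
          else lam ^ 3 * (-lam1 + 3 * lam * (b - 1))) • ((1 : Polynomial ℂ) ⊗ₜ[ℂ] v) := by
  intro k hk2 hk4
  interval_cases k <;>
  · simp only [tensorD, omegaD, LinearMap.add_apply, LinearMap.rTensor_tmul,
      LinearMap.lTensor_tmul, LinearMap.coe_mk, AddHom.coe_mk, h1, h2, h3 3 le_rfl,
      h3 4 (by norm_num), Polynomial.one_comp, mul_one, aux_tmul, tmul_smul, if_true,
      reduceIte, Int.cast_ofNat, Int.cast_one, one_mul]
    norm_num [zpow_one, zpow_ofNat, smul_smul, smul_add, tmul_zero]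
    module
end

section
/- Let λ ∈ ℂ* and n ∈ ℤ_+. Then the subspace b_{λ,n} = span_ℂ{ d_k - λ^{k-n+1} d_{n-1} : k ≥ n } is a Lie subalgebra of the Virasoro algebra: the bracket of any two of the listed generators lies again in b_{λ,n}. -/
open Polynomial TensorProduct

/-- in any Lie algebra containing elements `d_i` (`i ∈ ℤ`) and a central `c`
satisfying the Virasoro relations, the subspace
`b_{λ,n} = span{d_k - λ^{k-n+1} d_{n-1} : k ≥ n}` is a Lie subalgebra: the bracket of any
two generators lies again in `b_{λ,n}`. -/
theorem subalgebra_b_lambda_n {L : Type*} [LieRing L] [LieAlgebra ℂ L]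
    (d : ℤ → L) (c : L)
    (hc : ∀ i : ℤ, ⁅c, d i⁆ = 0)
    (hd : ∀ i j : ℤ, ⁅d i, d j⁆ =
      ((j : ℂ) - (i : ℂ)) • d (i + j) +
        (if i + j = 0 then ((i : ℂ) ^ 3 - (i : ℂ)) / 12 else 0) • c)
    (lam : ℂ) (hlam : lam ≠ 0) (n : ℕ) (k l : ℤ) (hk : (n : ℤ) ≤ k) (hl : (n : ℤ) ≤ l) :
    ⁅d k - lam ^ (k - (n : ℤ) + 1) • d ((n : ℤ) - 1),
        d l - lam ^ (l - (n : ℤ) + 1) • d ((n : ℤ) - 1)⁆ ∈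
      Submodule.span ℂ
        {x : L | ∃ m : ℤ, (n : ℤ) ≤ m ∧
          x = d m - lam ^ (m - (n : ℤ) + 1) • d ((n : ℤ) - 1)} := by

  set S : Set L := {x : L | ∃ m : ℤ, (n : ℤ) ≤ m ∧
      x = d m - lam ^ (m - (n : ℤ) + 1) • d ((n : ℤ) - 1)} with hS
  -- membership of the generators (extended to m = n - 1, where the element is 0)
  have hmem : ∀ m : ℤ, (n : ℤ) - 1 ≤ m →
      d m - lam ^ (m - (n : ℤ) + 1) • d ((n : ℤ) - 1) ∈ Submodule.span ℂ S := by
    intro m hm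
    rcases eq_or_lt_of_le hm with h | h
    · have he : m - (n : ℤ) + 1 = 0 := by omega
      rw [he, ← h]
      simp
    · exact Submodule.subset_span ⟨m, by omega, rfl⟩
  -- the central terms all vanish
  have hif1 : (if k + l = 0 then ((k : ℂ) ^ 3 - (k : ℂ)) / 12 else 0) = 0 := by
    split_ifs with h
    · have : k = 0 := by omega
      simp [this]
    · rfl
  have hif2 : (if k + ((n : ℤ) - 1) = 0 then ((k : ℂ) ^ 3 - (k : ℂ)) / 12 else 0) = 0 := by
    split_ifs with h
    · have : k = 1 := by omega
      norm_num [this]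
    · rfl
  have hif3 : (if (n : ℤ) - 1 + l = 0 then
      (((((n : ℤ) - 1) : ℤ) : ℂ) ^ 3 - ((((n : ℤ) - 1) : ℤ) : ℂ)) / 12 else 0) = 0 := by
    split_ifs with h
    · have : (n : ℤ) - 1 = -1 := by omega
      rw [this]
      norm_num
    · rfl
  have h1 : ⁅d k, d l⁆ = ((l : ℂ) - (k : ℂ)) • d (k + l) := by
    rw [hd k l, hif1, zero_smul, add_zero]
  have h2 : ⁅d k, d ((n : ℤ) - 1)⁆ =
      (((((n : ℤ) - 1) : ℤ) : ℂ) - (k : ℂ)) • d (k + ((n : ℤ) - 1)) := by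
    rw [hd k ((n : ℤ) - 1), hif2, zero_smul, add_zero]
  have h3 : ⁅d ((n : ℤ) - 1), d l⁆ =
      ((l : ℂ) - (((((n : ℤ) - 1) : ℤ)) : ℂ)) • d ((n : ℤ) - 1 + l) := by
    rw [hd ((n : ℤ) - 1) l, hif3, zero_smul, add_zero]
  -- scalar identity for the coefficient of d (n-1)
  have hz1 : lam ^ (k + l - (n : ℤ) + 1) = lam ^ (l - (n : ℤ) + 1) * lam ^ k := by
    rw [← zpow_add₀ hlam]; congr 1; ring
  have hz2 : lam ^ (k + ((n : ℤ) - 1) - (n : ℤ) + 1) = lam ^ k := by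
    congr 1; ring
  have hz3 : lam ^ ((n : ℤ) - 1 + l - (n : ℤ) + 1) = lam ^ l := by
    congr 1; ring
  have hz4 : lam ^ (k - (n : ℤ) + 1) * lam ^ l = lam ^ (l - (n : ℤ) + 1) * lam ^ k := by
    rw [← zpow_add₀ hlam, ← zpow_add₀ hlam]; congr 1; ring
  have hzero : ((l : ℂ) - (k : ℂ)) * lam ^ (k + l - (n : ℤ) + 1)
      - lam ^ (l - (n : ℤ) + 1) * (((((n : ℤ) - 1) : ℤ) : ℂ) - (k : ℂ))
        * lam ^ (k + ((n : ℤ) - 1) - (n : ℤ) + 1)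
      - lam ^ (k - (n : ℤ) + 1) * ((l : ℂ) - ((((n : ℤ) - 1) : ℤ) : ℂ))
        * lam ^ ((n : ℤ) - 1 + l - (n : ℤ) + 1) = 0 := by
    rw [hz1, hz2, hz3]
    linear_combination (-((l : ℂ) - ((((n : ℤ) - 1) : ℤ) : ℂ))) * hz4
  -- the main algebraic identity
  have main : ⁅d k - lam ^ (k - (n : ℤ) + 1) • d ((n : ℤ) - 1),
        d l - lam ^ (l - (n : ℤ) + 1) • d ((n : ℤ) - 1)⁆ =
      ((l : ℂ) - (k : ℂ)) •
          (d (k + l) - lam ^ (k + l - (n : ℤ) + 1) • d ((n : ℤ) - 1))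
        + (-(lam ^ (l - (n : ℤ) + 1) * (((((n : ℤ) - 1) : ℤ) : ℂ) - (k : ℂ)))) •
          (d (k + ((n : ℤ) - 1))
            - lam ^ (k + ((n : ℤ) - 1) - (n : ℤ) + 1) • d ((n : ℤ) - 1))
        + (-(lam ^ (k - (n : ℤ) + 1) * ((l : ℂ) - ((((n : ℤ) - 1) : ℤ) : ℂ)))) •
          (d ((n : ℤ) - 1 + l)
            - lam ^ ((n : ℤ) - 1 + l - (n : ℤ) + 1) • d ((n : ℤ) - 1)) := by
    rw [lie_sub, sub_lie, sub_lie, lie_smul, lie_smul, smul_lie, smul_lie, lie_self,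
      smul_zero, h1, h2, h3]
    push_cast
    push_cast at hzero
    match_scalars <;>
      first
        | ring1
        | linear_combination hzero
        | linear_combination -hzero
        | linear_combination 2 * hzero
        | linear_combination -2 * hzero
        | linear_combination 3 * hzero
        | linear_combination -3 * hzero
  rw [main]
  refine add_mem (add_mem (Submodule.smul_mem _ _ ?_) (Submodule.smul_mem _ _ ?_))
    (Submodule.smul_mem _ _ ?_)
  · exact hmem _ (by omega)
  · exact hmem _ (by omega)
  · exact hmem _ (by omega)
end

section
/- Let λ ∈ ℂ*, n ∈ ℤ_+, and s_n, …, s_{2n} ∈ ℂ. The linear functional on b_{λ,n} = span{d_k - λ^{k-n+1}d_{n-1} : k ≥ n} defined by (d_k - λ^{k-n+1}d_{n-1}) ↦ s_k for n ≤ k ≤ 2n and (d_k - λ^{k-n+1}d_{n-1}) ↦ -(k-2n)s_{2n-1}λ^{k-2n+1} + (k-2n+1)s_{2n}λ^{k-2n} for k > 2n (with s_{-1} := 0) is a one-dimensional representation of b_{λ,n}: it vanishes on all brackets [x,y] for x, y ∈ b_{λ,n}. -/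
open Polynomial TensorProduct

/-- the linear functional on `b_{λ,n}` sending the generator
`d_k - λ^{k-n+1}d_{n-1}` to `s_k` for `n ≤ k ≤ 2n` and to
`-(k-2n)s_{2n-1}λ^{k-2n+1} + (k-2n+1)s_{2n}λ^{k-2n}` for `k > 2n` (with `s_{-1} := 0`)
is a one-dimensional representation: it vanishes on all brackets of elements of `b_{λ,n}`. -/
theorem character_of_b_lambda_n {L : Type*} [LieRing L] [LieAlgebra ℂ L]
    (d : ℤ → L) (c : L)
    (hc : ∀ i : ℤ, ⁅c, d i⁆ = 0)
    (hd : ∀ i j : ℤ, ⁅d i, d j⁆ =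
      ((j : ℂ) - (i : ℂ)) • d (i + j) +
        (if i + j = 0 then ((i : ℂ) ^ 3 - (i : ℂ)) / 12 else 0) • c)
    (lam : ℂ) (hlam : lam ≠ 0) (n : ℕ) (s : ℤ → ℂ)
    (ψ : L →ₗ[ℂ] ℂ)
    (hψ : ∀ m : ℤ, (n : ℤ) ≤ m →
      ψ (d m - lam ^ (m - (n : ℤ) + 1) • d ((n : ℤ) - 1)) =
        if m ≤ 2 * (n : ℤ) then s m
        else -((m : ℂ) - 2 * (n : ℂ)) * (if 1 ≤ n then s (2 * (n : ℤ) - 1) else 0) *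
            lam ^ (m - 2 * (n : ℤ) + 1) +
          ((m : ℂ) - 2 * (n : ℂ) + 1) * s (2 * (n : ℤ)) * lam ^ (m - 2 * (n : ℤ))) :
    ∀ k l : ℤ, (n : ℤ) ≤ k → (n : ℤ) ≤ l →
      ψ ⁅d k - lam ^ (k - (n : ℤ) + 1) • d ((n : ℤ) - 1),
          d l - lam ^ (l - (n : ℤ) + 1) • d ((n : ℤ) - 1)⁆ = 0 := by
  intro k l hk hl
  obtain ⟨u, rfl⟩ : ∃ u : ℕ, k = (n : ℤ) + u := ⟨(k - n).toNat, by omega⟩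
  obtain ⟨v, rfl⟩ : ∃ v : ℕ, l = (n : ℤ) + v := ⟨(l - n).toNat, by omega⟩
  set t := ψ (d ((n : ℤ) - 1)) with ht
  set a := (if 1 ≤ n then s (2 * (n : ℤ) - 1) else 0 : ℂ) with ha
  set b := s (2 * (n : ℤ)) with hb
  have key : ∀ m : ℤ, 2 * (n : ℤ) - 1 ≤ m →
      ψ (d m) = lam ^ (m - (n : ℤ) + 1) * t +
        (-((m : ℂ) - 2 * (n : ℂ)) * a * lam ^ (m - 2 * (n : ℤ) + 1) +
          ((m : ℂ) - 2 * (n : ℂ) + 1) * b * lam ^ (m - 2 * (n : ℤ))) := by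
    intro m hm
    by_cases hmn : (n : ℤ) ≤ m
    · have h := hψ m hmn
      rw [map_sub, map_smul, smul_eq_mul, ← ht, sub_eq_iff_eq_add] at h
      rcases lt_or_ge (2 * (n : ℤ)) m with h2 | h2
      · rw [if_neg (not_le.mpr h2)] at h
        rw [h]; ring
      · have hcase : m = 2 * (n : ℤ) - 1 ∨ m = 2 * (n : ℤ) := by omega
        rcases hcase with rfl | rfl
        · have hn1 : 1 ≤ n := by omega
          rw [if_pos h2] at h
          rw [h, ha, if_pos hn1]
          have e1 : 2 * (n : ℤ) - 1 - 2 * (n : ℤ) + 1 = 0 := by ring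
          have e2 : 2 * (n : ℤ) - 1 - 2 * (n : ℤ) = -1 := by ring
          rw [e1, e2, zpow_zero]
          push_cast
          ring
        · rw [if_pos h2, ← hb] at h
          rw [h]
          have e1 : 2 * (n : ℤ) - 2 * (n : ℤ) + 1 = 1 := by ring
          have e2 : 2 * (n : ℤ) - 2 * (n : ℤ) = 0 := by ring
          rw [e1, e2, zpow_zero, zpow_one]
          push_cast
          ring
    · have hn0 : n = 0 := by omega
      subst hn0
      have hm1 : m = -1 := by omega
      subst hm1
      rw [ha]
      norm_num
      rw [ht]
      norm_num
  have hif1 : (if (n : ℤ) + u + ((n : ℤ) + v) = 0 then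
      ((((n : ℤ) + u : ℤ) : ℂ) ^ 3 - (((n : ℤ) + u : ℤ) : ℂ)) / 12 else 0) = 0 := by
    rcases eq_or_ne ((n : ℤ) + u + ((n : ℤ) + v)) 0 with h0 | h0
    · rw [if_pos h0]
      obtain ⟨hn0, hu0⟩ : n = 0 ∧ u = 0 := by omega
      subst hn0; subst hu0
      norm_num
    · rw [if_neg h0]
  have hif2 : (if (n : ℤ) + u + ((n : ℤ) - 1) = 0 then
      ((((n : ℤ) + u : ℤ) : ℂ) ^ 3 - (((n : ℤ) + u : ℤ) : ℂ)) / 12 else 0) = 0 := by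
    rcases eq_or_ne ((n : ℤ) + u + ((n : ℤ) - 1)) 0 with h0 | h0
    · rw [if_pos h0]
      obtain ⟨hn0, hu0⟩ : n = 0 ∧ u = 1 := by omega
      subst hn0; subst hu0
      norm_num
    · rw [if_neg h0]
  have hif3 : (if (n : ℤ) - 1 + ((n : ℤ) + v) = 0 then
      ((((n : ℤ) - 1 : ℤ) : ℂ) ^ 3 - (((n : ℤ) - 1 : ℤ) : ℂ)) / 12 else 0) = 0 := by
    rcases eq_or_ne ((n : ℤ) - 1 + ((n : ℤ) + v)) 0 with h0 | h0
    · rw [if_pos h0]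
      obtain ⟨hn0, hv0⟩ : n = 0 ∧ v = 1 := by omega
      subst hn0; subst hv0
      norm_num
    · rw [if_neg h0]
  have hK1 : ψ (d ((n : ℤ) + u + ((n : ℤ) + v))) =
      lam ^ (n + u + v + 1) * t +
        (-((u : ℂ) + v) * a * lam ^ (u + v + 1) + ((u : ℂ) + v + 1) * b * lam ^ (u + v)) := by
    rw [key _ (by omega),
      show (n : ℤ) + u + ((n : ℤ) + v) - (n : ℤ) + 1 = ((n + u + v + 1 : ℕ) : ℤ) by
        push_cast; ring,
      show (n : ℤ) + u + ((n : ℤ) + v) - 2 * (n : ℤ) + 1 = ((u + v + 1 : ℕ) : ℤ) by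
        push_cast; ring,
      show (n : ℤ) + u + ((n : ℤ) + v) - 2 * (n : ℤ) = ((u + v : ℕ) : ℤ) by push_cast; ring,
      zpow_natCast, zpow_natCast, zpow_natCast]
    push_cast
    ring
  have hK2 : ψ (d ((n : ℤ) + u + ((n : ℤ) - 1))) * lam =
      lam ^ (n + u + 1) * t - ((u : ℂ) - 1) * a * lam ^ (u + 1) + (u : ℂ) * b * lam ^ u := by
    rw [key _ (by omega),
      show (n : ℤ) + u + ((n : ℤ) - 1) - (n : ℤ) + 1 = ((n + u : ℕ) : ℤ) by push_cast; ring,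
      show (n : ℤ) + u + ((n : ℤ) - 1) - 2 * (n : ℤ) + 1 = ((u : ℕ) : ℤ) by push_cast; ring,
      show (n : ℤ) + u + ((n : ℤ) - 1) - 2 * (n : ℤ) = (u : ℤ) - 1 by push_cast; ring,
      zpow_sub₀ hlam, zpow_one, zpow_natCast, zpow_natCast]
    push_cast
    field_simp
    ring
  have hK3 : ψ (d ((n : ℤ) - 1 + ((n : ℤ) + v))) * lam =
      lam ^ (n + v + 1) * t - ((v : ℂ) - 1) * a * lam ^ (v + 1) + (v : ℂ) * b * lam ^ v := by
    rw [key _ (by omega),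
      show (n : ℤ) - 1 + ((n : ℤ) + v) - (n : ℤ) + 1 = ((n + v : ℕ) : ℤ) by push_cast; ring,
      show (n : ℤ) - 1 + ((n : ℤ) + v) - 2 * (n : ℤ) + 1 = ((v : ℕ) : ℤ) by push_cast; ring,
      show (n : ℤ) - 1 + ((n : ℤ) + v) - 2 * (n : ℤ) = (v : ℤ) - 1 by push_cast; ring,
      zpow_sub₀ hlam, zpow_one, zpow_natCast, zpow_natCast]
    push_cast
    field_simp
    ring
  rw [lie_sub, sub_lie, sub_lie, lie_smul, lie_smul, smul_lie, smul_lie, lie_self, smul_zero,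
    smul_zero, hd ((n : ℤ) + u) ((n : ℤ) + v), hd ((n : ℤ) + u) ((n : ℤ) - 1),
    hd ((n : ℤ) - 1) ((n : ℤ) + v), hif1, hif2, hif3, zero_smul, add_zero, add_zero, add_zero]
  simp only [map_sub, map_add, map_smul, map_zero, smul_eq_mul]
  rw [show lam ^ ((n : ℤ) + v - (n : ℤ) + 1) = lam ^ (v + 1) by
      rw [show (n : ℤ) + v - (n : ℤ) + 1 = ((v + 1 : ℕ) : ℤ) by push_cast; ring, zpow_natCast],
    show lam ^ ((n : ℤ) + u - (n : ℤ) + 1) = lam ^ (u + 1) by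
      rw [show (n : ℤ) + u - (n : ℤ) + 1 = ((u + 1 : ℕ) : ℤ) by push_cast; ring, zpow_natCast]]
  push_cast
  linear_combination ((v : ℂ) - u) * hK1 + ((u : ℂ) + 1) * lam ^ v * hK2 -
    ((v : ℂ) + 1) * lam ^ u * hK3
end
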